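/- arXiv:1609.04616 — 2 statements merged into one kernel-verified Lean document; each statement's English description precedes it below -/
import Mathlib

section
/- Let q ≥ 1 be an integer and let (s_j)_{j=0}^∞ be a Stieltjes positive definite sequence of complex q×q matrices with Stieltjes parametrization (𝔮_j)_{j=0}^∞, and write L_k := 𝔮_{2k} and Λ_k := 𝔮_{2k+1} for the even- and odd-indexed parameters. Then the corresponding parameters of the first Kátětov transform satisfy L_k^{(1)} = Λ_k and Λ_k^{(1)} = L_{k+1} for every k ∈ ℕ₀. -/
open Matrix
open scoped ComplexOrder

noncomputable section

/-- The space of complex `q × q` matrices. -/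
abbrev Mq (q : ℕ) := Matrix (Fin q) (Fin q) ℂ

/-- The space of complex `2q × 2q` matrices, written in `q × q` blocks. -/
abbrev M2q (q : ℕ) := Matrix (Fin q ⊕ Fin q) (Fin q ⊕ Fin q) ℂ

/-- Block Hankel matrix `H_n = (s_{j+k})_{j,k=0}^n`. -/
def Hmat (q : ℕ) (s : ℕ → Mq q) (n : ℕ) :
    Matrix (Fin (n + 1) × Fin q) (Fin (n + 1) × Fin q) ℂ :=
  Matrix.of fun p r => s (p.1.1 + r.1.1) p.2 r.2

/-- Block Hankel matrix `K_n = (s_{j+k+1})_{j,k=0}^n`. -/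
def Kmat (q : ℕ) (s : ℕ → Mq q) (n : ℕ) :
    Matrix (Fin (n + 1) × Fin q) (Fin (n + 1) × Fin q) ℂ :=
  Matrix.of fun p r => s (p.1.1 + r.1.1 + 1) p.2 r.2

/-- A sequence of complex `q × q` matrices is Stieltjes positive definite if all the
block Hankel matrices `H_n` and `K_n` are positive definite (in particular Hermitian). -/
def IsStieltjesPD (q : ℕ) (s : ℕ → Mq q) : Prop :=
  ∀ n : ℕ, (Hmat q s n).PosDef ∧ (Kmat q s n).PosDef

/-- Even Stieltjes parameters `𝔮_{2k}` (Schur complements `L_k`). -/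
def qEven (q : ℕ) (s : ℕ → Mq q) : ℕ → Mq q
  | 0 => s 0
  | k + 1 =>
      s (2 * (k + 1)) -
        (Matrix.of fun (a : Fin q) (r : Fin (k + 1) × Fin q) => s (k + 1 + r.1.1) a r.2) *
          (Hmat q s k)⁻¹ *
          (Matrix.of fun (p : Fin (k + 1) × Fin q) (b : Fin q) => s (k + 1 + p.1.1) p.2 b)

/-- Odd Stieltjes parameters `𝔮_{2k+1}` (Schur complements `Λ_k`). -/
def qOdd (q : ℕ) (s : ℕ → Mq q) : ℕ → Mq q
  | 0 => s 1
  | k + 1 =>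
      s (2 * (k + 1) + 1) -
        (Matrix.of fun (a : Fin q) (r : Fin (k + 1) × Fin q) => s (k + 2 + r.1.1) a r.2) *
          (Kmat q s k)⁻¹ *
          (Matrix.of fun (p : Fin (k + 1) × Fin q) (b : Fin q) => s (k + 2 + p.1.1) p.2 b)

/-- Stieltjes parametrization `𝔮_j`. -/
def qpar (q : ℕ) (s : ℕ → Mq q) (j : ℕ) : Mq q :=
  if j % 2 = 0 then qEven q s (j / 2) else qOdd q s (j / 2)

/-- Reciprocal sequence `s^♯`. -/
def reciprocal (q : ℕ) (s : ℕ → Mq q) : ℕ → Mq q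
  | 0 => (s 0)⁻¹
  | j + 1 =>
      -(s 0)⁻¹ *
        ∑ l ∈ (Finset.range (j + 1)).attach, s (j + 1 - l.1) * reciprocal q s l.1
  decreasing_by exact Finset.mem_range.mp l.2

/-- First Kátětov transform `s^{(1)}_j = −s_0 s_{j+1}^♯ s_0`. -/
def katetov1 (q : ℕ) (s : ℕ → Mq q) : ℕ → Mq q :=
  fun j => -(s 0) * reciprocal q s (j + 1) * s 0

/-- `ℓ`-th Kátětov transform (the `ℓ`-fold iterate of the first Kátětov transform). -/
def katetov (q : ℕ) (ℓ : ℕ) (s : ℕ → Mq q) : ℕ → Mq q :=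
  (katetov1 q)^[ℓ] s

/-- `v_k = col(I_q, 0_{kq×q})`. -/
def vcol (q k : ℕ) : Matrix (Fin (k + 1) × Fin q) (Fin q) ℂ :=
  Matrix.of fun p b => if p.1.1 = 0 ∧ p.2 = b then 1 else 0

/-- `y_{0,k} = col(s_0, …, s_k)`. -/
def ycol (q : ℕ) (s : ℕ → Mq q) (k : ℕ) : Matrix (Fin (k + 1) × Fin q) (Fin q) ℂ :=
  Matrix.of fun p b => s p.1.1 p.2 b

/-- Dyukarev–Stieltjes parameters `𝔐_k`. -/
def DSM (q : ℕ) (s : ℕ → Mq q) : ℕ → Mq q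
  | 0 => (s 0)⁻¹
  | k + 1 =>
      (vcol q (k + 1))ᴴ * (Hmat q s (k + 1))⁻¹ * vcol q (k + 1) -
        (vcol q k)ᴴ * (Hmat q s k)⁻¹ * vcol q k

/-- Dyukarev–Stieltjes parameters `𝔏_k`. -/
def DSL (q : ℕ) (s : ℕ → Mq q) : ℕ → Mq q
  | 0 => s 0 * (s 1)⁻¹ * s 0
  | k + 1 =>
      (ycol q s (k + 1))ᴴ * (Kmat q s (k + 1))⁻¹ * ycol q s (k + 1) -
        (ycol q s k)ᴴ * (Kmat q s k)⁻¹ * ycol q s k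

/-- Ordered product `A_0 A_1 ⋯ A_n`. -/
def oprod {α : Type*} [Monoid α] (f : ℕ → α) (n : ℕ) : α :=
  ((List.range (n + 1)).map f).prod

/-- Block shift `T_n = (δ_{j,k+1} I_q)_{j,k=0}^n`. -/
def Tmat (q n : ℕ) : Matrix (Fin (n + 1) × Fin q) (Fin (n + 1) × Fin q) ℂ :=
  Matrix.of fun p r => if p.1.1 = r.1.1 + 1 ∧ p.2 = r.2 then 1 else 0

/-- `R_n(z) = (I_{(n+1)q} − z T_n)⁻¹`. -/
def Rmat (q n : ℕ) (z : ℂ) : Matrix (Fin (n + 1) × Fin q) (Fin (n + 1) × Fin q) ℂ :=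
  (1 - z • Tmat q n)⁻¹

/-- `u_0 = 0`, `u_n = col(0_{q×q}, −y_{0,n−1})`. -/
def ucol (q : ℕ) (s : ℕ → Mq q) (n : ℕ) : Matrix (Fin (n + 1) × Fin q) (Fin q) ℂ :=
  Matrix.of fun p b => if p.1.1 = 0 then 0 else -(s (p.1.1 - 1) p.2 b)

/-- `col(−H_n⁻¹ y_{n+1,2n+1}, I_q)` of size `(n+2)q × q`. -/
def colH (q : ℕ) (s : ℕ → Mq q) (n : ℕ) : Matrix (Fin (n + 2) × Fin q) (Fin q) ℂ :=
  Matrix.of fun p b =>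
    if h : p.1.1 < n + 1 then
      (-((Hmat q s n)⁻¹ *
          Matrix.of fun (r : Fin (n + 1) × Fin q) (c : Fin q) => s (n + 1 + r.1.1) r.2 c))
        (⟨p.1.1, h⟩, p.2) b
    else if p.2 = b then 1 else 0

/-- `col(−K_n⁻¹ y_{n+2,2n+2}, I_q)` of size `(n+2)q × q`. -/
def colK (q : ℕ) (s : ℕ → Mq q) (n : ℕ) : Matrix (Fin (n + 2) × Fin q) (Fin q) ℂ :=
  Matrix.of fun p b =>
    if h : p.1.1 < n + 1 then
      (-((Kmat q s n)⁻¹ *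
          Matrix.of fun (r : Fin (n + 1) × Fin q) (c : Fin q) => s (n + 2 + r.1.1) r.2 c))
        (⟨p.1.1, h⟩, p.2) b
    else if p.2 = b then 1 else 0

/-- `z_{0,n} = row(s_0, …, s_n)`. -/
def zrow (q : ℕ) (s : ℕ → Mq q) (n : ℕ) : Matrix (Fin q) (Fin (n + 1) × Fin q) ℂ :=
  Matrix.of fun a r => s r.1.1 a r.2

/-- Orthogonal matrix polynomials `P_n`. -/
def Ppoly (q : ℕ) (s : ℕ → Mq q) : ℕ → ℂ → Mq q
  | 0, _ => 1
  | n + 1, z => (vcol q (n + 1))ᴴ * (Rmat q (n + 1) (starRingEnd ℂ z))ᴴ * colH q s n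

/-- Second kind matrix polynomials `Q_n`. -/
def Qpoly (q : ℕ) (s : ℕ → Mq q) : ℕ → ℂ → Mq q
  | 0, _ => 0
  | n + 1, z => -((ucol q s (n + 1))ᴴ * (Rmat q (n + 1) (starRingEnd ℂ z))ᴴ * colH q s n)

/-- Matrix polynomials `P̂_n`. -/
def Phat (q : ℕ) (s : ℕ → Mq q) : ℕ → ℂ → Mq q
  | 0, _ => 1
  | n + 1, z => (vcol q (n + 1))ᴴ * (Rmat q (n + 1) (starRingEnd ℂ z))ᴴ * colK q s n

/-- Matrix polynomials `Q̂_n`. -/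
def Qhat (q : ℕ) (s : ℕ → Mq q) : ℕ → ℂ → Mq q
  | 0, _ => s 0
  | n + 1, z => zrow q s (n + 1) * (Rmat q (n + 1) (starRingEnd ℂ z))ᴴ * colK q s n

/-- `α_n(z)`. -/
def alphaP (q : ℕ) (s : ℕ → Mq q) (n : ℕ) (z : ℂ) : Mq q :=
  1 - z • ((ucol q s n)ᴴ * (Rmat q n (starRingEnd ℂ z))ᴴ * (Hmat q s n)⁻¹ * vcol q n)

/-- `γ_n(z)`. -/
def gammaP (q : ℕ) (s : ℕ → Mq q) (n : ℕ) (z : ℂ) : Mq q :=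
  -(z • ((vcol q n)ᴴ * (Rmat q n (starRingEnd ℂ z))ᴴ * (Hmat q s n)⁻¹ * vcol q n))

/-- `β_n(z)`. -/
def betaP (q : ℕ) (s : ℕ → Mq q) : ℕ → ℂ → Mq q
  | 0, _ => 0
  | n + 1, z => (ycol q s n)ᴴ * (Rmat q n (starRingEnd ℂ z))ᴴ * (Kmat q s n)⁻¹ * ycol q s n

/-- `δ_n(z)`. -/
def deltaP (q : ℕ) (s : ℕ → Mq q) : ℕ → ℂ → Mq q
  | 0, _ => 1
  | n + 1, z =>
      1 + z • ((vcol q n)ᴴ * (Rmat q n (starRingEnd ℂ z))ᴴ * (Kmat q s n)⁻¹ * ycol q s n)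

/-- The resolvent matrices `U_m(z)`. -/
def Umat (q : ℕ) (s : ℕ → Mq q) (m : ℕ) (z : ℂ) : M2q q :=
  if m % 2 = 0 then
    Matrix.fromBlocks (alphaP q s (m / 2) z) (betaP q s (m / 2) z)
      (gammaP q s (m / 2) z) (deltaP q s (m / 2) z)
  else
    Matrix.fromBlocks (alphaP q s (m / 2) z) (betaP q s (m / 2 + 1) z)
      (gammaP q s (m / 2) z) (deltaP q s (m / 2 + 1) z)

/-- `𝕄_k(z) = [[I, 0], [−z𝔐_k, I]]`. -/
def MM (q : ℕ) (s : ℕ → Mq q) (k : ℕ) (z : ℂ) : M2q q :=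
  Matrix.fromBlocks 1 0 (-(z • DSM q s k)) 1

/-- `𝕃_k = [[I, 𝔏_k], [0, I]]`. -/
def LL (q : ℕ) (s : ℕ → Mq q) (k : ℕ) : M2q q :=
  Matrix.fromBlocks 1 (DSL q s k) 0 1

/-- `𝒫_n = diag([P_n(0)]^{−*}, P_n(0))`. -/
def PPmat (q : ℕ) (s : ℕ → Mq q) (n : ℕ) : M2q q :=
  Matrix.fromBlocks (((Ppoly q s n 0)⁻¹)ᴴ) 0 0 (Ppoly q s n 0)

/-- `𝐐_n(z) = [[0, Q̂_n(0)], [−z[Q̂_n(0)]^{−*}, 0]]`. -/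
def QQgen (q : ℕ) (s : ℕ → Mq q) (n : ℕ) (z : ℂ) : M2q q :=
  Matrix.fromBlocks 0 (Qhat q s n 0) (-(z • ((Qhat q s n 0)⁻¹)ᴴ)) 0

/-- `𝐐_0^{(ℓ)}(z) = [[0, s_0^{(ℓ)}], [−z(s_0^{(ℓ)})⁻¹, 0]]`. -/
def QQ0 (q : ℕ) (s : ℕ → Mq q) (ℓ : ℕ) (z : ℂ) : M2q q :=
  Matrix.fromBlocks 0 (katetov q ℓ s 0) (-(z • (katetov q ℓ s 0)⁻¹)) 0

/-- `𝒬_m(z) = 𝐐_0^{(0)}(z) ⋯ 𝐐_0^{(m)}(z)`. -/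
def Qprod (q : ℕ) (s : ℕ → Mq q) (m : ℕ) (z : ℂ) : M2q q :=
  oprod (fun ℓ => QQ0 q s ℓ z) m

namespace SAux
open Finset
variable {q : ℕ}

def BM (q n : ℕ) (E : ℕ → ℕ → Mq q) : Matrix (Fin (n+1) × Fin q) (Fin (n+1) × Fin q) ℂ :=
  Matrix.of fun p r => E p.1.1 r.1.1 p.2 r.2

def BC (q n : ℕ) (v : ℕ → Mq q) : Matrix (Fin (n+1) × Fin q) (Fin q) ℂ :=
  Matrix.of fun p b => v p.1.1 p.2 b

def BR (q n : ℕ) (c : ℕ → Mq q) : Matrix (Fin q) (Fin (n+1) × Fin q) ℂ :=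
  Matrix.of fun a p => c p.1.1 a p.2

def emb (q n : ℕ) : Matrix (Fin (n+1) × Fin q) (Fin q) ℂ :=
  BC q n (fun j => if j = n then (1 : Mq q) else 0)

lemma BM_ext {n : ℕ} {E F : ℕ → ℕ → Mq q} (h : ∀ j k, j ≤ n → k ≤ n → E j k = F j k) :
    BM q n E = BM q n F := by
  ext ⟨⟨j, hj⟩, x⟩ ⟨⟨k, hk⟩, y⟩
  have := h j k (by omega) (by omega)
  simp [BM, this]

lemma BM_inj {n : ℕ} {E F : ℕ → ℕ → Mq q} (h : BM q n E = BM q n F)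
    {j k : ℕ} (hj : j ≤ n) (hk : k ≤ n) : E j k = F j k := by
  ext x y
  have := congrFun (congrFun h (⟨j, by omega⟩, x)) (⟨k, by omega⟩, y)
  simpa [BM] using this

lemma BC_ext {n : ℕ} {v w : ℕ → Mq q} (h : ∀ j, j ≤ n → v j = w j) :
    BC q n v = BC q n w := by
  ext ⟨⟨j, hj⟩, x⟩ y
  have := h j (by omega)
  simp [BC, this]

lemma BC_inj {n : ℕ} {v w : ℕ → Mq q} (h : BC q n v = BC q n w)
    {j : ℕ} (hj : j ≤ n) : v j = w j := by
  ext x y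
  have := congrFun (congrFun h (⟨j, by omega⟩, x)) y
  simpa [BC] using this

lemma BM_mul_BM {n : ℕ} (E F : ℕ → ℕ → Mq q) :
    BM q n E * BM q n F = BM q n (fun j k => ∑ a ∈ range (n+1), E j a * F a k) := by
  ext p r
  simp only [BM, Matrix.mul_apply, Matrix.of_apply, Matrix.sum_apply,
    Fintype.sum_prod_type, ← Fin.sum_univ_eq_sum_range]

lemma BM_mul_BC {n : ℕ} (E : ℕ → ℕ → Mq q) (v : ℕ → Mq q) :
    BM q n E * BC q n v = BC q n (fun j => ∑ a ∈ range (n+1), E j a * v a) := by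
  ext p b
  simp only [BM, BC, Matrix.mul_apply, Matrix.of_apply, Matrix.sum_apply,
    Fintype.sum_prod_type, ← Fin.sum_univ_eq_sum_range]

lemma BR_mul_BC {n : ℕ} (c v : ℕ → Mq q) :
    BR q n c * BC q n v = ∑ a ∈ range (n+1), c a * v a := by
  ext a b
  simp only [BR, BC, Matrix.mul_apply, Matrix.of_apply, Matrix.sum_apply,
    Fintype.sum_prod_type, ← Fin.sum_univ_eq_sum_range]

lemma BCT_mul_BC {n : ℕ} (u v : ℕ → Mq q) :
    (BC q n u)ᴴ * BC q n v = ∑ a ∈ range (n+1), (u a)ᴴ * v a := by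
  ext x y
  simp only [BC, Matrix.mul_apply, Matrix.conjTranspose_apply, Matrix.of_apply,
    Matrix.sum_apply, Fintype.sum_prod_type, ← Fin.sum_univ_eq_sum_range]

lemma BC_mul_M {n : ℕ} (v : ℕ → Mq q) (g : Mq q) :
    BC q n v * g = BC q n (fun j => v j * g) := by
  ext p b
  simp only [BC, Matrix.mul_apply, Matrix.of_apply]

lemma BM_conjT {n : ℕ} (E : ℕ → ℕ → Mq q) :
    (BM q n E)ᴴ = BM q n (fun j k => (E k j)ᴴ) := by
  ext p r
  simp [BM, Matrix.conjTranspose_apply]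

lemma BC_neg {n : ℕ} (v : ℕ → Mq q) : -(BC q n v) = BC q n (fun j => -(v j)) := by
  ext p b; simp [BC]

lemma one_BM {n : ℕ} :
    (1 : Matrix (Fin (n+1) × Fin q) (Fin (n+1) × Fin q) ℂ)
      = BM q n (fun j k => if j = k then 1 else 0) := by
  ext ⟨⟨j, hj⟩, x⟩ ⟨⟨k, hk⟩, y⟩
  by_cases h : j = k
  · subst h
    by_cases hxy : x = y
    · subst hxy; simp [BM, Matrix.one_apply]
    · simp [BM, Matrix.one_apply, Prod.ext_iff, hxy]
  · simp [BM, Matrix.one_apply, Prod.ext_iff, Fin.ext_iff, h]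

def mblkC (q n : ℕ) (M : Matrix (Fin (n+1) × Fin q) (Fin q) ℂ) (j : ℕ) : Mq q :=
  if h : j < n+1 then Matrix.of (fun x y => M (⟨j, h⟩, x) y) else 0

lemma BC_repr {n : ℕ} (M : Matrix (Fin (n+1) × Fin q) (Fin q) ℂ) :
    BC q n (mblkC q n M) = M := by
  ext ⟨⟨j, hj⟩, x⟩ y
  simp [BC, mblkC, hj, show j ≤ n by omega]

def mblkM (q n : ℕ) (M : Matrix (Fin (n+1) × Fin q) (Fin (n+1) × Fin q) ℂ) (j k : ℕ) : Mq q :=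
  if h : j < n+1 ∧ k < n+1 then Matrix.of (fun x y => M (⟨j, h.1⟩, x) (⟨k, h.2⟩, y)) else 0

lemma BM_repr {n : ℕ} (M : Matrix (Fin (n+1) × Fin q) (Fin (n+1) × Fin q) ℂ) :
    BM q n (mblkM q n M) = M := by
  ext ⟨⟨j, hj⟩, x⟩ ⟨⟨k, hk⟩, y⟩
  simp [BM, mblkM, hj, hk, show j ≤ n by omega, show k ≤ n by omega]

lemma embT_mul_BC {n : ℕ} (v : ℕ → Mq q) : (emb q n)ᴴ * BC q n v = v n := by
  rw [emb, BCT_mul_BC]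
  rw [Finset.sum_eq_single n]
  · simp
  · intro a _ ha; simp [ha]
  · intro h; exact absurd (self_mem_range_succ n) h

lemma emb_mul_M {n : ℕ} (g : Mq q) :
    emb q n * g = BC q n (fun j => if j = n then g else 0) := by
  rw [emb, BC_mul_M]
  exact BC_ext (fun j _ => by split_ifs <;> simp)

end SAux
namespace SAux
open Finset
variable {q : ℕ}

lemma toep_row {M : Type*} [AddCommMonoid M] {n j : ℕ} (hj : j ≤ n) (f : ℕ → M) :
    ∑ a ∈ range (n+1), (if a ≤ j then f a else 0) = ∑ a ∈ range (j+1), f a := by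
  calc ∑ a ∈ range (n+1), (if a ≤ j then f a else 0)
      = ∑ a ∈ range (j+1), (if a ≤ j then f a else 0) :=
        (Finset.sum_subset (Finset.range_subset_range.2 (by omega))
          (fun a _ ha => if_neg (by simpa [Nat.lt_succ_iff] using ha))).symm
    _ = ∑ a ∈ range (j+1), f a :=
        Finset.sum_congr rfl (fun a ha => if_pos (by simpa [Nat.lt_succ_iff] using ha))

lemma toep_shift {M : Type*} [AddCommMonoid M] {n k : ℕ} (f : ℕ → M) :
    ∑ a ∈ range (n+1), (if k ≤ a then f a else 0) = ∑ l ∈ range (n+1-k), f (k+l) := by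
  calc ∑ a ∈ range (n+1), (if k ≤ a then f a else 0)
      = ∑ a ∈ Finset.Ico k (n+1), (if k ≤ a then f a else 0) := by
        refine (Finset.sum_subset ?_ ?_).symm
        · rw [Finset.range_eq_Ico]; exact Finset.Ico_subset_Ico (Nat.zero_le k) le_rfl
        · intro a ha hna
          refine if_neg (fun hka => hna (Finset.mem_Ico.2 ⟨hka, by simpa using ha⟩))
    _ = ∑ a ∈ Finset.Ico k (n+1), f a :=
        Finset.sum_congr rfl (fun a ha => if_pos (Finset.mem_Ico.1 ha).1)
    _ = ∑ l ∈ range (n+1-k), f (k+l) := Finset.sum_Ico_eq_sum_range f k (n+1)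

lemma tri_swap {M : Type*} [AddCommMonoid M] (m : ℕ) (G : ℕ → ℕ → M) :
    ∑ l ∈ range (m+1), ∑ r ∈ range (m-l+1), G l r
      = ∑ r ∈ range (m+1), ∑ l ∈ range (m-r+1), G l r := by
  have key : ∀ (H : ℕ → ℕ → M) (l : ℕ), l ≤ m →
      ∑ r ∈ range (m-l+1), H l r = ∑ r ∈ range (m+1), (if l + r ≤ m then H l r else 0) := by
    intro H l hl
    calc ∑ r ∈ range (m-l+1), H l r
        = ∑ r ∈ range (m-l+1), (if l + r ≤ m then H l r else 0) :=
          Finset.sum_congr rfl (fun r hr => (if_pos (by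
            have := Finset.mem_range.1 hr; omega)).symm)
      _ = ∑ r ∈ range (m+1), (if l + r ≤ m then H l r else 0) :=
          Finset.sum_subset (Finset.range_subset_range.2 (by omega))
            (fun r _ hr => if_neg (by simp only [Finset.mem_range] at hr; omega))
  calc ∑ l ∈ range (m+1), ∑ r ∈ range (m-l+1), G l r
      = ∑ l ∈ range (m+1), ∑ r ∈ range (m+1), (if l + r ≤ m then G l r else 0) :=
        Finset.sum_congr rfl (fun l hl => key G l (by simpa [Nat.lt_succ_iff] using hl))
    _ = ∑ r ∈ range (m+1), ∑ l ∈ range (m+1), (if l + r ≤ m then G l r else 0) :=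
        Finset.sum_comm
    _ = ∑ r ∈ range (m+1), ∑ l ∈ range (m-r+1), G l r := by
        refine Finset.sum_congr rfl (fun r hr => ?_)
        rw [Finset.sum_congr rfl (fun l _ => by rw [Nat.add_comm l r]),
          ← key (fun a b => G b a) r (by simpa [Nat.lt_succ_iff] using hr)]

lemma tri_reindex {M : Type*} [AddCommMonoid M] (j : ℕ) (F : ℕ → ℕ → M) :
    ∑ a ∈ range (j+1), ∑ c ∈ range a, F a c
      = ∑ c ∈ range (j+1), ∑ l ∈ range (j-c), F (c+1+l) c := by
  have key : ∀ a, a ≤ j → ∑ c ∈ range a, F a c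
      = ∑ c ∈ range (j+1), (if c < a then F a c else 0) := by
    intro a ha
    calc ∑ c ∈ range a, F a c
        = ∑ c ∈ range a, (if c < a then F a c else 0) :=
          Finset.sum_congr rfl (fun c hc => (if_pos (Finset.mem_range.1 hc)).symm)
      _ = ∑ c ∈ range (j+1), (if c < a then F a c else 0) :=
          Finset.sum_subset (Finset.range_subset_range.2 (by omega))
            (fun c _ hc => if_neg (by simpa using hc))
  calc ∑ a ∈ range (j+1), ∑ c ∈ range a, F a c
      = ∑ a ∈ range (j+1), ∑ c ∈ range (j+1), (if c < a then F a c else 0) :=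
        Finset.sum_congr rfl (fun a ha => key a (by simpa [Nat.lt_succ_iff] using ha))
    _ = ∑ c ∈ range (j+1), ∑ a ∈ range (j+1), (if c < a then F a c else 0) :=
        Finset.sum_comm
    _ = ∑ c ∈ range (j+1), ∑ l ∈ range (j-c), F (c+1+l) c := by
        refine Finset.sum_congr rfl (fun c hc => ?_)
        have hc' : c ≤ j := by simpa [Nat.lt_succ_iff] using hc
        have h1 : ∀ a : ℕ, (if c < a then F a c else 0) = (if c+1 ≤ a then F a c else 0) := by
          intro a; rfl
        rw [Finset.sum_congr rfl (fun a _ => h1 a),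
          toep_shift (k := c+1) (fun a => F a c),
          show j+1-(c+1) = j - c by omega]

lemma tri_reindex' {M : Type*} [AddCommMonoid M] (j : ℕ) (F : ℕ → ℕ → M) :
    ∑ a ∈ range (j+1), ∑ c ∈ range (a+1), F a c
      = ∑ c ∈ range (j+1), ∑ l ∈ range (j-c+1), F (c+l) c := by
  have key : ∀ a, a ≤ j → ∑ c ∈ range (a+1), F a c
      = ∑ c ∈ range (j+1), (if c ≤ a then F a c else 0) := by
    intro a ha
    calc ∑ c ∈ range (a+1), F a c
        = ∑ c ∈ range (a+1), (if c ≤ a then F a c else 0) :=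
          Finset.sum_congr rfl (fun c hc => (if_pos (by simpa [Nat.lt_succ_iff] using hc)).symm)
      _ = ∑ c ∈ range (j+1), (if c ≤ a then F a c else 0) :=
          Finset.sum_subset (Finset.range_subset_range.2 (by omega))
            (fun c _ hc => if_neg (by simpa [Nat.lt_succ_iff] using hc))
  calc ∑ a ∈ range (j+1), ∑ c ∈ range (a+1), F a c
      = ∑ a ∈ range (j+1), ∑ c ∈ range (j+1), (if c ≤ a then F a c else 0) :=
        Finset.sum_congr rfl (fun a ha => key a (by simpa [Nat.lt_succ_iff] using ha))
    _ = ∑ c ∈ range (j+1), ∑ a ∈ range (j+1), (if c ≤ a then F a c else 0) :=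
        Finset.sum_comm
    _ = ∑ c ∈ range (j+1), ∑ l ∈ range (j-c+1), F (c+l) c := by
        refine Finset.sum_congr rfl (fun c hc => ?_)
        have hc' : c ≤ j := by simpa [Nat.lt_succ_iff] using hc
        rw [toep_shift (k := c) (fun a => F a c),
          show j+1-c = j - c + 1 by omega]

lemma sum_range_split {M : Type*} [AddCommMonoid M] (m a : ℕ) (f : ℕ → M) :
    ∑ i ∈ range (m + a), f i = ∑ i ∈ range m, f i + ∑ c ∈ range a, f (m + c) := by
  induction a with
  | zero => simp
  | succ a ih =>
      rw [show m + (a+1) = (m+a)+1 from rfl, Finset.sum_range_succ, ih,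
        Finset.sum_range_succ, add_assoc]

end SAux
namespace SAux
open Finset
variable {q : ℕ} (s : ℕ → Mq q)

lemma recip_zero : reciprocal q s 0 = (s 0)⁻¹ := by rw [reciprocal]

lemma recip_succ (j : ℕ) :
    reciprocal q s (j+1)
      = -(s 0)⁻¹ * ∑ l ∈ range (j+1), s (j+1-l) * reciprocal q s l := by
  rw [reciprocal]
  congr 1
  exact Finset.sum_attach (range (j+1)) (fun l => s (j+1-l) * reciprocal q s l)

lemma kat1_eq (j : ℕ) : katetov1 q s j = -(s 0) * reciprocal q s (j+1) * s 0 := rfl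

variable (hd0 : IsUnit (s 0).det)
include hd0

lemma Lval (m : ℕ) :
    ∑ l ∈ range (m+1), s (m-l) * reciprocal q s l = if m = 0 then 1 else 0 := by
  match m with
  | 0 => simp [recip_zero, Matrix.mul_nonsing_inv _ hd0]
  | m+1 =>
      rw [if_neg (by omega), Finset.sum_range_succ, Nat.sub_self, recip_succ,
        Matrix.neg_mul, Matrix.mul_neg, ← Matrix.mul_assoc,
        Matrix.mul_nonsing_inv _ hd0, Matrix.one_mul]
      exact add_neg_cancel _

lemma keyR (m : ℕ) :
    ∑ c ∈ range (m+1), s (m-c) * (∑ l ∈ range (c+1), reciprocal q s l * s (c-l))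
      = s m := by
  have h1 : ∑ c ∈ range (m+1), s (m-c) * (∑ l ∈ range (c+1), reciprocal q s l * s (c-l))
      = ∑ c ∈ range (m+1), ∑ l ∈ range (c+1), s (m-c) * (reciprocal q s l * s (c-l)) :=
    Finset.sum_congr rfl (fun c _ => Finset.mul_sum _ _ _)
  rw [h1, tri_reindex' m (fun c l => s (m-c) * (reciprocal q s l * s (c-l)))]
  have h2 : ∀ l ∈ range (m+1), ∀ r ∈ range (m-l+1),
      s (m-(l+r)) * (reciprocal q s l * s ((l+r)-l))
        = (s ((m-r)-l) * reciprocal q s l) * s r := by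
    intro l hl r hr
    simp only [Finset.mem_range, Nat.lt_succ_iff] at hl hr
    rw [show (l+r)-l = r by omega, show m-(l+r) = (m-r)-l by omega, Matrix.mul_assoc]
  rw [Finset.sum_congr rfl (fun l hl => Finset.sum_congr rfl (fun r hr => h2 l hl r hr)),
    tri_swap m (fun l r => (s ((m-r)-l) * reciprocal q s l) * s r)]
  have h3 : ∀ r ∈ range (m+1),
      ∑ l ∈ range (m-r+1), (s ((m-r)-l) * reciprocal q s l) * s r
        = (if m - r = 0 then 1 else 0) * s r := by
    intro r _
    rw [← Finset.sum_mul, Lval s hd0 (m-r)]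
  rw [Finset.sum_congr rfl h3, Finset.sum_eq_single m]
  · simp
  · intro r hr hrm
    rw [if_neg (by simp only [Finset.mem_range, Nat.lt_succ_iff] at hr; omega), zero_mul]
  · intro h; exact absurd (self_mem_range_succ m) h

lemma Rval (m : ℕ) :
    ∑ l ∈ range (m+1), reciprocal q s l * s (m-l) = if m = 0 then 1 else 0 := by
  induction m using Nat.strong_induction_on with
  | _ m ih =>
    match m with
    | 0 => simp [recip_zero, Matrix.nonsing_inv_mul _ hd0]
    | m+1 =>
        rw [if_neg (by omega)]
        have hk := keyR s hd0 (m+1)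
        rw [Finset.sum_range_succ, Nat.sub_self] at hk
        have h4 : ∑ c ∈ range (m+1),
            s (m+1-c) * (∑ l ∈ range (c+1), reciprocal q s l * s (c-l))
            = ∑ c ∈ range (m+1), s (m+1-c) * (if c = 0 then 1 else 0) := by
          refine Finset.sum_congr rfl (fun c hc => ?_)
          rw [ih c (by simp only [Finset.mem_range] at hc; omega)]
        rw [h4, Finset.sum_eq_single 0 (fun c _ hc => by rw [if_neg hc, mul_zero])
          (fun h => absurd (Finset.mem_range.2 (by omega)) h), if_pos rfl, mul_one] at hk
        rw [Nat.sub_zero] at hk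
        -- hk : s (m+1) + s 0 * (∑ ...) = s (m+1)
        have h5 : s 0 * (∑ l ∈ range (m+2), reciprocal q s l * s (m+1-l)) = 0 := by
          have h6 := hk
          nth_rewrite 2 [← add_zero (s (m+1))] at h6
          exact add_left_cancel h6
        calc ∑ l ∈ range (m+2), reciprocal q s l * s (m+1-l)
            = (s 0)⁻¹ * (s 0 * (∑ l ∈ range (m+2), reciprocal q s l * s (m+1-l))) :=
              (Matrix.nonsing_inv_mul_cancel_left _ _ hd0).symm
          _ = 0 := by rw [h5, mul_zero]

end SAux
namespace SAux
open Finset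
variable {q : ℕ} (s : ℕ → Mq q) (hd0 : IsUnit (s 0).det)
include hd0

lemma conv1' (m : ℕ) :
    ∑ l ∈ range (m+1), s (m-l) * (s 0)⁻¹ * katetov1 q s l = s (m+1) := by
  have hterm : ∀ l, s (m-l) * (s 0)⁻¹ * katetov1 q s l
      = -(s (m-l) * reciprocal q s (l+1) * s 0) := by
    intro l
    rw [kat1_eq, Matrix.neg_mul, Matrix.neg_mul, Matrix.mul_neg,
      Matrix.mul_assoc (s (m-l)) ((s 0)⁻¹), Matrix.mul_assoc (s 0),
      Matrix.nonsing_inv_mul_cancel_left _ _ hd0, ← Matrix.mul_assoc]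
  rw [Finset.sum_congr rfl (fun l _ => hterm l)]
  have hsum : ∑ l ∈ range (m+1), s (m-l) * reciprocal q s (l+1)
      = -(s (m+1) * (s 0)⁻¹) := by
    have hL := Lval s hd0 (m+1)
    rw [if_neg (by omega), Finset.sum_range_succ' _ (m+1)] at hL
    simp only [Nat.succ_sub_succ, Nat.sub_zero, recip_zero] at hL
    exact eq_neg_of_add_eq_zero_left hL
  calc ∑ l ∈ range (m+1), -(s (m-l) * reciprocal q s (l+1) * s 0)
      = -((∑ l ∈ range (m+1), s (m-l) * reciprocal q s (l+1)) * s 0) := by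
        rw [Finset.sum_neg_distrib, Finset.sum_mul]
    _ = s (m+1) * (s 0)⁻¹ * s 0 := by rw [hsum, Matrix.neg_mul, neg_neg]
    _ = s (m+1) := Matrix.nonsing_inv_mul_cancel_right _ _ hd0

lemma conv2' (m : ℕ) :
    ∑ i ∈ range (m+1), katetov1 q s (m-i) * (s 0)⁻¹ * s i = s (m+1) := by
  have hterm : ∀ i, katetov1 q s (m-i) * (s 0)⁻¹ * s i
      = -(s 0 * (reciprocal q s ((m-i)+1) * s i)) := by
    intro i
    rw [kat1_eq, Matrix.neg_mul, Matrix.neg_mul, Matrix.neg_mul,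
      Matrix.mul_nonsing_inv_cancel_right _ _ hd0, Matrix.neg_mul, Matrix.mul_assoc]
  rw [Finset.sum_congr rfl (fun i _ => hterm i)]
  have hsum : ∑ i ∈ range (m+1), reciprocal q s ((m-i)+1) * s i
      = -((s 0)⁻¹ * s (m+1)) := by
    have hR := Rval s hd0 (m+1)
    rw [if_neg (by omega), Finset.sum_range_succ' _ (m+1)] at hR
    simp only [Nat.succ_sub_succ, Nat.sub_zero, recip_zero] at hR
    -- hR : ∑ l ∈ range (m+1), reciprocal q s (l+1) * s (m-l) + (s 0)⁻¹ * s (m+1) = 0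
    have hrefl := Finset.sum_range_reflect
      (fun l => reciprocal q s (l+1) * s (m-l)) (m+1)
    have hc : ∀ i ∈ range (m+1),
        reciprocal q s ((m+1-1-i)+1) * s (m-(m+1-1-i))
          = reciprocal q s ((m-i)+1) * s i := by
      intro i hi
      simp only [Finset.mem_range, Nat.lt_succ_iff] at hi
      rw [show m+1-1-i = m-i by omega, show m-(m-i) = i by omega]
    rw [Finset.sum_congr rfl hc] at hrefl
    rw [hrefl]
    exact eq_neg_of_add_eq_zero_left hR
  calc ∑ i ∈ range (m+1), -(s 0 * (reciprocal q s ((m-i)+1) * s i))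
      = -(s 0 * ∑ i ∈ range (m+1), reciprocal q s ((m-i)+1) * s i) := by
        rw [Finset.sum_neg_distrib, Finset.mul_sum]
    _ = s 0 * ((s 0)⁻¹ * s (m+1)) := by rw [hsum, Matrix.mul_neg, neg_neg]
    _ = s (m+1) := Matrix.mul_nonsing_inv_cancel_left _ _ hd0

end SAux
namespace SAux
open Finset
variable {q : ℕ} (s : ℕ → Mq q) (hd0 : IsUnit (s 0).det)
include hd0

lemma key2a (j k : ℕ) :
    ∑ a ∈ range (j+1), s (j-a) * (s 0)⁻¹ *
      (∑ b ∈ range (k+1), katetov1 q s (a+b) * (s 0)⁻¹ * s (k-b))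
      = s (j+k+1) := by
  match k with
  | 0 =>
      have h1 : ∀ a, ∑ b ∈ range 1, katetov1 q s (a+b) * (s 0)⁻¹ * s (0-b)
          = katetov1 q s a := by
        intro a
        rw [Finset.sum_range_one, Nat.add_zero, Nat.sub_zero,
          Matrix.nonsing_inv_mul_cancel_right _ _ hd0]
      rw [Finset.sum_congr rfl (fun a _ => by rw [h1 a])]
      exact conv1' s hd0 j
  | k+1 =>
      have hinner : ∀ a, ∑ b ∈ range (k+2), katetov1 q s (a+b) * (s 0)⁻¹ * s (k+1-b)
          = s (a+k+2) - ∑ c ∈ range a, katetov1 q s (a-1-c) * (s 0)⁻¹ * s (k+2+c) := by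
        intro a
        have hc2 := conv2' s hd0 (a+k+1)
        have hsplit : ∑ i ∈ range (a+k+1+1), katetov1 q s (a+k+1-i) * (s 0)⁻¹ * s i
            = ∑ i ∈ range (k+2), katetov1 q s (a+k+1-i) * (s 0)⁻¹ * s i
              + ∑ c ∈ range a, katetov1 q s (a+k+1-(k+2+c)) * (s 0)⁻¹ * s (k+2+c) := by
          rw [show a+k+1+1 = (k+2)+a by omega]
          exact sum_range_split (k+2) a _
        have hrefl : ∑ b ∈ range (k+2), katetov1 q s (a+b) * (s 0)⁻¹ * s (k+1-b)
            = ∑ i ∈ range (k+2), katetov1 q s (a+k+1-i) * (s 0)⁻¹ * s i := by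
          rw [← Finset.sum_range_reflect
            (fun i => katetov1 q s (a+k+1-i) * (s 0)⁻¹ * s i) (k+2)]
          refine Finset.sum_congr rfl (fun b hb => ?_)
          simp only [Finset.mem_range] at hb
          rw [show k+2-1-b = k+1-b by omega, show a+k+1-(k+1-b) = a+b by omega]
        have htail : ∀ c, katetov1 q s (a+k+1-(k+2+c)) * (s 0)⁻¹ * s (k+2+c)
            = katetov1 q s (a-1-c) * (s 0)⁻¹ * s (k+2+c) := by
          intro c; rw [show a+k+1-(k+2+c) = a-1-c by omega]
        rw [hrefl]
        rw [hsplit, Finset.sum_congr rfl (fun c _ => htail c)] at hc2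
        rw [eq_sub_iff_add_eq]
        exact hc2
      rw [Finset.sum_congr rfl (fun a _ => by rw [hinner a])]
      have hdistrib : ∀ a, s (j-a) * (s 0)⁻¹ *
          (s (a+k+2) - ∑ c ∈ range a, katetov1 q s (a-1-c) * (s 0)⁻¹ * s (k+2+c))
          = s (j-a) * (s 0)⁻¹ * s (a+k+2)
            - ∑ c ∈ range a, s (j-a) * (s 0)⁻¹ *
                (katetov1 q s (a-1-c) * (s 0)⁻¹ * s (k+2+c)) := by
        intro a; rw [Matrix.mul_sub, Finset.mul_sum]
      rw [Finset.sum_congr rfl (fun a _ => hdistrib a), Finset.sum_sub_distrib]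
      -- second sum
      have hsecond : ∑ a ∈ range (j+1), ∑ c ∈ range a,
            s (j-a) * (s 0)⁻¹ * (katetov1 q s (a-1-c) * (s 0)⁻¹ * s (k+2+c))
          = ∑ c ∈ range (j+1), (∑ l ∈ range (j-c), s (j-c-1-l) * (s 0)⁻¹ * katetov1 q s l)
              * ((s 0)⁻¹ * s (k+2+c)) := by
        rw [tri_reindex j (fun a c =>
          s (j-a) * (s 0)⁻¹ * (katetov1 q s (a-1-c) * (s 0)⁻¹ * s (k+2+c)))]
        refine Finset.sum_congr rfl (fun c hc => ?_)
        rw [Finset.sum_mul]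
        refine Finset.sum_congr rfl (fun l hl => ?_)
        rw [show c+1+l-1-c = l by omega, show j-(c+1+l) = j-c-1-l by omega]
        rw [Matrix.mul_assoc (katetov1 q s l), ← Matrix.mul_assoc (s (j-c-1-l) * (s 0)⁻¹),
          ← Matrix.mul_assoc]
      rw [hsecond]
      have hsec2 : ∑ c ∈ range (j+1), (∑ l ∈ range (j-c), s (j-c-1-l) * (s 0)⁻¹ * katetov1 q s l)
              * ((s 0)⁻¹ * s (k+2+c))
          = ∑ c ∈ range j, s (j-c) * ((s 0)⁻¹ * s (k+2+c)) := by
        rw [Finset.sum_range_succ, Nat.sub_self, Finset.range_zero, Finset.sum_empty,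
          Matrix.zero_mul, add_zero]
        refine Finset.sum_congr rfl (fun c hc => ?_)
        simp only [Finset.mem_range] at hc
        have h7 : ∑ l ∈ range (j-c), s (j-c-1-l) * (s 0)⁻¹ * katetov1 q s l = s (j-c) := by
          have h8 := conv1' s hd0 (j-c-1)
          rw [show (j-c-1)+1 = j-c by omega] at h8
          exact h8
        rw [h7]
      rw [hsec2]
      -- first sum
      have hfirst : ∑ a ∈ range (j+1), s (j-a) * (s 0)⁻¹ * s (a+k+2)
          = (∑ c ∈ range j, s (j-c) * ((s 0)⁻¹ * s (k+2+c))) + s (j+k+2) := by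
        rw [Finset.sum_range_succ, Nat.sub_self]
        congr 1
        · refine Finset.sum_congr rfl (fun c hc => ?_)
          rw [Matrix.mul_assoc, show c+k+2 = k+2+c by omega]
        · rw [Matrix.mul_nonsing_inv _ hd0, Matrix.one_mul]
      rw [hfirst, show j+(k+1)+1 = j+k+2 by omega]
      abel

lemma key2b (j k : ℕ) :
    ∑ a ∈ range (j+1), s (j-a) * (s 0)⁻¹ *
      (∑ b ∈ range (k+1), katetov1 q s (a+b+1) * (s 0)⁻¹ * s (k-b))
      = s (j+k+2) - s (j+1) * (s 0)⁻¹ * s (k+1) := by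
  have hinner : ∀ a, ∑ b ∈ range (k+1), katetov1 q s (a+b+1) * (s 0)⁻¹ * s (k-b)
      = s (a+k+2) - ∑ c ∈ range (a+1), katetov1 q s (a-c) * (s 0)⁻¹ * s (k+1+c) := by
    intro a
    have hc2 := conv2' s hd0 (a+k+1)
    have hsplit : ∑ i ∈ range (a+k+1+1), katetov1 q s (a+k+1-i) * (s 0)⁻¹ * s i
        = ∑ i ∈ range (k+1), katetov1 q s (a+k+1-i) * (s 0)⁻¹ * s i
          + ∑ c ∈ range (a+1), katetov1 q s (a+k+1-(k+1+c)) * (s 0)⁻¹ * s (k+1+c) := by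
      rw [show a+k+1+1 = (k+1)+(a+1) by omega]
      exact sum_range_split (k+1) (a+1) _
    have hrefl : ∑ b ∈ range (k+1), katetov1 q s (a+b+1) * (s 0)⁻¹ * s (k-b)
        = ∑ i ∈ range (k+1), katetov1 q s (a+k+1-i) * (s 0)⁻¹ * s i := by
      rw [← Finset.sum_range_reflect
        (fun i => katetov1 q s (a+k+1-i) * (s 0)⁻¹ * s i) (k+1)]
      refine Finset.sum_congr rfl (fun b hb => ?_)
      simp only [Finset.mem_range] at hb
      rw [show k+1-1-b = k-b by omega, show a+k+1-(k-b) = a+b+1 by omega]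
    have htail : ∀ c, katetov1 q s (a+k+1-(k+1+c)) * (s 0)⁻¹ * s (k+1+c)
        = katetov1 q s (a-c) * (s 0)⁻¹ * s (k+1+c) := by
      intro c; rw [show a+k+1-(k+1+c) = a-c by omega]
    rw [hrefl]
    rw [hsplit, Finset.sum_congr rfl (fun c _ => htail c)] at hc2
    rw [eq_sub_iff_add_eq]
    exact hc2
  rw [Finset.sum_congr rfl (fun a _ => by rw [hinner a])]
  have hdistrib : ∀ a, s (j-a) * (s 0)⁻¹ *
      (s (a+k+2) - ∑ c ∈ range (a+1), katetov1 q s (a-c) * (s 0)⁻¹ * s (k+1+c))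
      = s (j-a) * (s 0)⁻¹ * s (a+k+2)
        - ∑ c ∈ range (a+1), s (j-a) * (s 0)⁻¹ *
            (katetov1 q s (a-c) * (s 0)⁻¹ * s (k+1+c)) := by
    intro a; rw [Matrix.mul_sub, Finset.mul_sum]
  rw [Finset.sum_congr rfl (fun a _ => hdistrib a), Finset.sum_sub_distrib]
  have hsecond : ∑ a ∈ range (j+1), ∑ c ∈ range (a+1),
        s (j-a) * (s 0)⁻¹ * (katetov1 q s (a-c) * (s 0)⁻¹ * s (k+1+c))
      = ∑ c ∈ range (j+1), s (j+1-c) * ((s 0)⁻¹ * s (k+1+c)) := by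
    rw [tri_reindex' j (fun a c =>
      s (j-a) * (s 0)⁻¹ * (katetov1 q s (a-c) * (s 0)⁻¹ * s (k+1+c)))]
    refine Finset.sum_congr rfl (fun c hc => ?_)
    simp only [Finset.mem_range, Nat.lt_succ_iff] at hc
    have hstep : ∀ l ∈ range (j-c+1),
        s (j-(c+l)) * (s 0)⁻¹ * (katetov1 q s ((c+l)-c) * (s 0)⁻¹ * s (k+1+c))
          = (s ((j-c)-l) * (s 0)⁻¹ * katetov1 q s l) * ((s 0)⁻¹ * s (k+1+c)) := by
      intro l hl
      rw [show (c+l)-c = l by omega, show j-(c+l) = (j-c)-l by omega,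
        Matrix.mul_assoc (katetov1 q s l), ← Matrix.mul_assoc (s ((j-c)-l) * (s 0)⁻¹),
        ← Matrix.mul_assoc]
    rw [Finset.sum_congr rfl hstep, ← Finset.sum_mul, conv1' s hd0 (j-c),
      show (j-c)+1 = j+1-c by omega]
  rw [hsecond]
  have hfirst : ∑ a ∈ range (j+1), s (j-a) * (s 0)⁻¹ * s (a+k+2)
      = (∑ c ∈ range (j+1), s (j+1-c) * ((s 0)⁻¹ * s (k+1+c)))
          + s (j+k+2) - s (j+1) * ((s 0)⁻¹ * s (k+1)) := by
    have hg := Finset.sum_range_succ'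
      (fun c => s (j+1-c) * ((s 0)⁻¹ * s (k+1+c))) (j+1)
    -- hg : ∑_{c ∈ range (j+2)} g c = ∑_{a ∈ range (j+1)} g (a+1) + g 0
    have hga : ∀ a ∈ range (j+1),
        s (j+1-(a+1)) * ((s 0)⁻¹ * s (k+1+(a+1))) = s (j-a) * (s 0)⁻¹ * s (a+k+2) := by
      intro a ha
      rw [show j+1-(a+1) = j-a by omega, show k+1+(a+1) = a+k+2 by omega, Matrix.mul_assoc]
    rw [Finset.sum_congr rfl hga] at hg
    have hg2 := Finset.sum_range_succ
      (fun c => s (j+1-c) * ((s 0)⁻¹ * s (k+1+c))) (j+1)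
    rw [hg2] at hg
    -- hg : ∑_{range (j+1)} g + g (j+1) = first + g 0
    rw [eq_sub_iff_add_eq]
    have hgj : s (j+1-(j+1)) * ((s 0)⁻¹ * s (k+1+(j+1))) = s (j+k+2) := by
      rw [show j+1-(j+1) = 0 by omega, show k+1+(j+1) = j+k+2 by omega,
        Matrix.mul_nonsing_inv_cancel_left _ _ hd0]
    have hg0 : s (j+1-0) * ((s 0)⁻¹ * s (k+1+0)) = s (j+1) * ((s 0)⁻¹ * s (k+1)) := by
      rw [Nat.sub_zero, Nat.add_zero]
    rw [hgj, hg0] at hg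
    exact hg.symm
  rw [hfirst, Matrix.mul_assoc (s (j+1))]
  abel

end SAux
namespace SAux
open Finset
variable {q : ℕ} (s : ℕ → Mq q)

def dfun : ℕ → ℕ → Mq q := fun j k => if k ≤ j then s (j-k) * (s 0)⁻¹ else 0
def ufun : ℕ → ℕ → Mq q := fun j k => if k ≤ j then s 0 * reciprocal q s (j-k) else 0
def Dm (q : ℕ) (s : ℕ → Mq q) (n : ℕ) := BM q n (dfun s)
def Um (q : ℕ) (s : ℕ → Mq q) (n : ℕ) := BM q n (ufun s)

lemma toep_conv (c d : ℕ → Mq q) {n j k : ℕ} (hj : j ≤ n) :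
    ∑ a ∈ range (n+1), (if a ≤ j then c (j-a) else 0) * (if k ≤ a then d (a-k) else 0)
      = if k ≤ j then ∑ l ∈ range (j-k+1), c (j-k-l) * d l else 0 := by
  by_cases hkj : k ≤ j
  · rw [if_pos hkj]
    have h1 : ∀ a ∈ range (n+1),
        (if a ≤ j then c (j-a) else 0) * (if k ≤ a then d (a-k) else 0)
        = (if a ≤ j then (if k ≤ a then c (j-a) * d (a-k) else 0) else 0) := by
      intro a _; split_ifs <;> simp
    rw [Finset.sum_congr rfl h1, toep_row hj,
      toep_shift (k := k) (fun a => c (j-a) * d (a-k)),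
      show j+1-k = j-k+1 by omega]
    refine Finset.sum_congr rfl (fun l hl => ?_)
    rw [show j-(k+l) = j-k-l by omega, show (k+l)-k = l by omega]
  · rw [if_neg hkj]
    refine Finset.sum_eq_zero (fun a _ => ?_)
    by_cases haj : a ≤ j
    · rw [if_neg (show ¬ k ≤ a by omega), mul_zero]
    · rw [if_neg haj, zero_mul]

variable (hd0 : IsUnit (s 0).det)
include hd0

lemma Rval' (m : ℕ) :
    ∑ l ∈ range (m+1), reciprocal q s (m-l) * s l = if m = 0 then 1 else 0 := by
  rw [← Rval s hd0 m, ← Finset.sum_range_reflect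
    (fun l => reciprocal q s l * s (m-l)) (m+1)]
  refine Finset.sum_congr rfl (fun i hi => ?_)
  simp only [Finset.mem_range, Nat.lt_succ_iff] at hi
  rw [show m+1-1-i = m-i by omega, show m-(m-i) = i by omega]

lemma Dm_mul_Um (n : ℕ) : Dm q s n * Um q s n = 1 := by
  rw [Dm, Um, BM_mul_BM, one_BM]
  refine BM_ext (fun j k hj hk => ?_)
  have h1 := toep_conv (fun m => s m * (s 0)⁻¹) (fun m => s 0 * reciprocal q s m) hj (k := k)
  simp only [dfun, ufun]
  rw [h1]
  by_cases hkj : k ≤ j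
  · rw [if_pos hkj]
    have h2 : ∀ l ∈ range (j-k+1), (s (j-k-l) * (s 0)⁻¹) * (s 0 * reciprocal q s l)
        = s (j-k-l) * reciprocal q s l := by
      intro l _
      rw [Matrix.mul_assoc, Matrix.nonsing_inv_mul_cancel_left _ _ hd0]
    rw [Finset.sum_congr rfl h2, Lval s hd0 (j-k)]
    split_ifs <;> first | rfl | omega
  · rw [if_neg hkj, if_neg (by omega)]

lemma Um_mul_Dm (n : ℕ) : Um q s n * Dm q s n = 1 := by
  rw [Dm, Um, BM_mul_BM, one_BM]
  refine BM_ext (fun j k hj hk => ?_)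
  have h1 := toep_conv (fun m => s 0 * reciprocal q s m) (fun m => s m * (s 0)⁻¹) hj (k := k)
  simp only [dfun, ufun]
  rw [h1]
  by_cases hkj : k ≤ j
  · rw [if_pos hkj]
    have h2 : ∀ l ∈ range (j-k+1), (s 0 * reciprocal q s (j-k-l)) * (s l * (s 0)⁻¹)
        = s 0 * (reciprocal q s (j-k-l) * s l) * (s 0)⁻¹ := by
      intro l _
      rw [Matrix.mul_assoc (s 0), ← Matrix.mul_assoc (reciprocal q s (j-k-l)),
        ← Matrix.mul_assoc]
    rw [Finset.sum_congr rfl h2]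
    have h3 : ∑ l ∈ range (j-k+1), s 0 * (reciprocal q s (j-k-l) * s l) * (s 0)⁻¹
        = s 0 * (∑ l ∈ range (j-k+1), reciprocal q s (j-k-l) * s l) * (s 0)⁻¹ := by
      rw [← Finset.sum_mul, ← Finset.mul_sum]
    rw [h3, Rval' s hd0 (j-k)]
    by_cases hjk0 : j - k = 0
    · rw [if_pos hjk0, if_pos (by omega), mul_one, Matrix.mul_nonsing_inv _ hd0]
    · rw [if_neg hjk0, if_neg (by omega), mul_zero, Matrix.zero_mul]
  · rw [if_neg hkj, if_neg (by omega)]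

lemma Dm_mul_emb (n : ℕ) : Dm q s n * emb q n = emb q n := by
  rw [Dm, emb, BM_mul_BC]
  refine BC_ext (fun j hj => ?_)
  rw [Finset.sum_eq_single n (fun a _ ha => by rw [if_neg ha, mul_zero])
    (fun h => absurd (self_mem_range_succ n) h), if_pos rfl, mul_one]
  simp only [dfun]
  by_cases hjn : j = n
  · rw [if_pos hjn, if_pos (by omega), hjn, Nat.sub_self, Matrix.mul_nonsing_inv _ hd0]
  · rw [if_neg hjn, if_neg (by omega)]

lemma Um_mul_emb (n : ℕ) : Um q s n * emb q n = emb q n := by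
  rw [Um, emb, BM_mul_BC]
  refine BC_ext (fun j hj => ?_)
  rw [Finset.sum_eq_single n (fun a _ ha => by rw [if_neg ha, mul_zero])
    (fun h => absurd (self_mem_range_succ n) h), if_pos rfl, mul_one]
  simp only [ufun]
  by_cases hjn : j = n
  · rw [if_pos hjn, if_pos (by omega), hjn, Nat.sub_self, recip_zero,
      Matrix.mul_nonsing_inv _ hd0]
  · rw [if_neg hjn, if_neg (by omega)]

variable (herm : ∀ m, (s m)ᴴ = s m)
include herm

omit hd0 in
lemma dfunT (k b : ℕ) : (dfun s k b)ᴴ = if b ≤ k then (s 0)⁻¹ * s (k-b) else 0 := by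
  simp only [dfun]
  split_ifs with h
  · rw [Matrix.conjTranspose_mul, Matrix.conjTranspose_nonsing_inv, herm, herm]
  · exact Matrix.conjTranspose_zero

lemma I1 (n : ℕ) :
    Kmat q s n = Dm q s n * Hmat q (katetov1 q s) n * (Dm q s n)ᴴ := by
  have hKBM : Kmat q s n = BM q n (fun j k => s (j+k+1)) := rfl
  have hHBM : Hmat q (katetov1 q s) n = BM q n (fun j k => katetov1 q s (j+k)) := rfl
  rw [hKBM, hHBM, Dm, BM_conjT, BM_mul_BM, BM_mul_BM]
  refine (BM_ext (fun j k hj hk => ?_)).symm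
  have hstep1 : ∀ b, ∑ a ∈ range (n+1), dfun s j a * katetov1 q s (a+b)
      = ∑ a ∈ range (j+1), s (j-a) * (s 0)⁻¹ * katetov1 q s (a+b) := by
    intro b
    have := toep_row (n := n) hj (fun a => s (j-a) * (s 0)⁻¹ * katetov1 q s (a+b))
    rw [← this]
    refine Finset.sum_congr rfl (fun a _ => ?_)
    simp only [dfun, ite_mul, zero_mul, Matrix.mul_assoc]
  have hstep2 : ∑ b ∈ range (n+1),
      (∑ a ∈ range (j+1), s (j-a) * (s 0)⁻¹ * katetov1 q s (a+b)) * (dfun s k b)ᴴ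
      = ∑ b ∈ range (k+1),
        (∑ a ∈ range (j+1), s (j-a) * (s 0)⁻¹ * katetov1 q s (a+b))
          * ((s 0)⁻¹ * s (k-b)) := by
    have := toep_row (n := n) hk (fun b =>
      (∑ a ∈ range (j+1), s (j-a) * (s 0)⁻¹ * katetov1 q s (a+b)) * ((s 0)⁻¹ * s (k-b)))
    rw [← this]
    refine Finset.sum_congr rfl (fun b _ => ?_)
    rw [dfunT s herm]
    split_ifs <;> simp
  rw [Finset.sum_congr rfl (fun b _ => by rw [hstep1 b]), hstep2]
  have hswap : ∑ b ∈ range (k+1),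
      (∑ a ∈ range (j+1), s (j-a) * (s 0)⁻¹ * katetov1 q s (a+b)) * ((s 0)⁻¹ * s (k-b))
      = ∑ a ∈ range (j+1), ∑ b ∈ range (k+1),
        (s (j-a) * (s 0)⁻¹ * katetov1 q s (a+b)) * ((s 0)⁻¹ * s (k-b)) := by
    rw [Finset.sum_comm]
    exact Finset.sum_congr rfl (fun b _ => Finset.sum_mul _ _ _)
  rw [hswap]
  refine Eq.trans (Finset.sum_congr rfl (fun a ha => ?_)) (key2a s hd0 j k)
  rw [Finset.mul_sum]
  exact Finset.sum_congr rfl (fun b _ => by simp only [Matrix.mul_assoc])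

def Gm (q : ℕ) (s : ℕ → Mq q) (n : ℕ) : Matrix (Fin (n+1) × Fin q) (Fin (n+1) × Fin q) ℂ :=
  BM q n (fun j k => s (j+k+2) - s (j+1) * (s 0)⁻¹ * s (k+1))

lemma I2 (n : ℕ) :
    Gm q s n = Dm q s n * Kmat q (katetov1 q s) n * (Dm q s n)ᴴ := by
  have hKBM : Kmat q (katetov1 q s) n = BM q n (fun j k => katetov1 q s (j+k+1)) := rfl
  rw [Gm, hKBM, Dm, BM_conjT, BM_mul_BM, BM_mul_BM]
  refine (BM_ext (fun j k hj hk => ?_)).symm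
  have hstep1 : ∀ b, ∑ a ∈ range (n+1), dfun s j a * katetov1 q s (a+b+1)
      = ∑ a ∈ range (j+1), s (j-a) * (s 0)⁻¹ * katetov1 q s (a+b+1) := by
    intro b
    have := toep_row (n := n) hj (fun a => s (j-a) * (s 0)⁻¹ * katetov1 q s (a+b+1))
    rw [← this]
    refine Finset.sum_congr rfl (fun a _ => ?_)
    simp only [dfun, ite_mul, zero_mul, Matrix.mul_assoc]
  have hstep2 : ∑ b ∈ range (n+1),
      (∑ a ∈ range (j+1), s (j-a) * (s 0)⁻¹ * katetov1 q s (a+b+1)) * (dfun s k b)ᴴ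
      = ∑ b ∈ range (k+1),
        (∑ a ∈ range (j+1), s (j-a) * (s 0)⁻¹ * katetov1 q s (a+b+1))
          * ((s 0)⁻¹ * s (k-b)) := by
    have := toep_row (n := n) hk (fun b =>
      (∑ a ∈ range (j+1), s (j-a) * (s 0)⁻¹ * katetov1 q s (a+b+1)) * ((s 0)⁻¹ * s (k-b)))
    rw [← this]
    refine Finset.sum_congr rfl (fun b _ => ?_)
    rw [dfunT s herm]
    split_ifs <;> simp
  rw [Finset.sum_congr rfl (fun b _ => by rw [hstep1 b]), hstep2]
  have hswap : ∑ b ∈ range (k+1),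
      (∑ a ∈ range (j+1), s (j-a) * (s 0)⁻¹ * katetov1 q s (a+b+1)) * ((s 0)⁻¹ * s (k-b))
      = ∑ a ∈ range (j+1), ∑ b ∈ range (k+1),
        (s (j-a) * (s 0)⁻¹ * katetov1 q s (a+b+1)) * ((s 0)⁻¹ * s (k-b)) := by
    rw [Finset.sum_comm]
    exact Finset.sum_congr rfl (fun b _ => Finset.sum_mul _ _ _)
  rw [hswap]
  refine Eq.trans (Finset.sum_congr rfl (fun a ha => ?_)) (key2b s hd0 j k)
  rw [Finset.mul_sum]
  exact Finset.sum_congr rfl (fun b _ => by simp only [Matrix.mul_assoc])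

end SAux
namespace SAux
open Finset
variable {q : ℕ}

lemma cross {n : ℕ} {A : Matrix (Fin (n+1) × Fin q) (Fin (n+1) × Fin q) ℂ}
    (hA : Aᴴ = A) {w₁ w₂ : Matrix (Fin (n+1) × Fin q) (Fin q) ℂ} {g₁ g₂ : Mq q}
    (h₁ : A * w₁ = emb q n * g₁) (e₁ : (emb q n)ᴴ * w₁ = 1)
    (h₂ : A * w₂ = emb q n * g₂) (e₂ : (emb q n)ᴴ * w₂ = 1) : g₂ = g₁ᴴ := by
  have key : w₁ᴴ * (A * w₂) = w₁ᴴ * (emb q n * g₂) := by rw [h₂]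
  have r1 : w₁ᴴ * (emb q n * g₂) = g₂ := by
    rw [← Matrix.mul_assoc, ← Matrix.conjTranspose_conjTranspose (emb q n),
      ← Matrix.conjTranspose_mul, e₁, Matrix.conjTranspose_one, Matrix.one_mul]
  have l1 : w₁ᴴ * (A * w₂) = g₁ᴴ := by
    have hwa : w₁ᴴ * A = g₁ᴴ * (emb q n)ᴴ := by
      rw [← hA, ← Matrix.conjTranspose_mul, h₁, Matrix.conjTranspose_mul]
    rw [← Matrix.mul_assoc, hwa, Matrix.mul_assoc, e₂, Matrix.mul_one]
  rw [l1, r1] at key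
  exact key.symm

lemma uniq {n : ℕ} {A : Matrix (Fin (n+1) × Fin q) (Fin (n+1) × Fin q) ℂ}
    (hA : Aᴴ = A) {w₁ w₂ : Matrix (Fin (n+1) × Fin q) (Fin q) ℂ} {g₁ g₂ : Mq q}
    (h₁ : A * w₁ = emb q n * g₁) (e₁ : (emb q n)ᴴ * w₁ = 1)
    (h₂ : A * w₂ = emb q n * g₂) (e₂ : (emb q n)ᴴ * w₂ = 1) : g₁ = g₂ := by
  have a1 : g₁ = g₂ᴴ := cross hA h₂ e₂ h₁ e₁
  have a2 : g₂ = g₂ᴴ := cross hA h₂ e₂ h₂ e₂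
  rw [a1, ← a2]

/-- characterization of the even Stieltjes parameters. -/
lemma char_even (r : ℕ → Mq q) (k : ℕ) (hr : IsUnit (Hmat q r (k-1)).det) :
    ∃ v : ℕ → Mq q, Hmat q r k * BC q k v = emb q k * qEven q r k ∧ v k = 1 := by
  match k with
  | 0 =>
      refine ⟨fun j => if j = 0 then 1 else 0, ?_, by simp⟩
      have h0 : Hmat q r 0 = BM q 0 (fun j a => r (j+a)) := rfl
      rw [h0, BM_mul_BC, emb_mul_M]
      refine BC_ext (fun j hj => ?_)
      interval_cases j
      rw [Finset.sum_range_one, if_pos rfl, if_pos rfl, mul_one, Nat.add_zero]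
      rfl
  | k+1 =>
      have hr' : IsUnit (Hmat q r k).det := hr
      set Y : Matrix (Fin (k+1) × Fin q) (Fin q) ℂ :=
        Matrix.of fun p b => r (k+1+p.1.1) p.2 b with hY
      set X : Matrix (Fin (k+1) × Fin q) (Fin q) ℂ := -((Hmat q r k)⁻¹ * Y) with hXdef
      refine ⟨fun j => if j ≤ k then mblkC q k X j else 1, ?_, by
        show (if k+1 ≤ k then mblkC q k X (k+1) else 1) = 1
        rw [if_neg (by omega)]⟩
      have hX : Hmat q r k * X = -Y := by
        rw [hXdef, Matrix.mul_neg, ← Matrix.mul_assoc, Matrix.mul_nonsing_inv _ hr',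
          Matrix.one_mul]
      have hXb : ∀ j, j ≤ k →
          ∑ a ∈ range (k+1), r (j+a) * mblkC q k X a = -(r (k+1+j)) := by
        intro j hj
        have h1 : Hmat q r k * BC q k (mblkC q k X) = BC q k (fun i => -(r (k+1+i))) := by
          rw [BC_repr, hX]
          rw [show -Y = BC q k (fun i => -(r (k+1+i))) from by
            rw [hY]; ext p b; simp [BC]]
        have h2 : Hmat q r k * BC q k (mblkC q k X)
            = BC q k (fun i => ∑ a ∈ range (k+1), r (i+a) * mblkC q k X a) := by
          have hH : Hmat q r k = BM q k (fun j a => r (j+a)) := rfl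
          rw [hH, BM_mul_BC]
        rw [h2] at h1
        exact BC_inj h1 hj
      have hZ : ∑ a ∈ range (k+1), r (k+1+a) * mblkC q k X a
          = -((Matrix.of fun (a : Fin q) (p : Fin (k+1) × Fin q) => r (k+1+p.1.1) a p.2) *
              (Hmat q r k)⁻¹ * Y) := by
        calc ∑ a ∈ range (k+1), r (k+1+a) * mblkC q k X a
            = BR q k (fun m => r (k+1+m)) * BC q k (mblkC q k X) :=
              (BR_mul_BC _ _).symm
          _ = BR q k (fun m => r (k+1+m)) * X := by rw [BC_repr]
          _ = _ := by rw [hXdef, Matrix.mul_neg, ← Matrix.mul_assoc]; rfl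
      have hH1 : Hmat q r (k+1) = BM q (k+1) (fun j a => r (j+a)) := rfl
      rw [hH1, BM_mul_BC, emb_mul_M]
      refine BC_ext (fun j hj => ?_)
      rw [Finset.sum_range_succ, if_neg (by omega : ¬ (k+1 : ℕ) ≤ k), mul_one]
      have hrest : ∑ a ∈ range (k+1), r (j+a) * (if a ≤ k then mblkC q k X a else 1)
          = ∑ a ∈ range (k+1), r (j+a) * mblkC q k X a := by
        refine Finset.sum_congr rfl (fun a ha => ?_)
        rw [if_pos (by simp only [Finset.mem_range, Nat.lt_succ_iff] at ha; exact ha)]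
      rw [hrest]
      by_cases hjk : j ≤ k
      · rw [hXb j hjk, if_neg (by omega)]
        rw [show j+(k+1) = k+1+j by omega]
        exact neg_add_cancel _
      · have hjeq : j = k+1 := by omega
        subst hjeq
        rw [if_pos rfl, hZ]
        have : qEven q r (k+1)
            = r (2*(k+1)) -
              (Matrix.of fun (a : Fin q) (p : Fin (k+1) × Fin q) => r (k+1+p.1.1) a p.2) *
                (Hmat q r k)⁻¹ *
                (Matrix.of fun (p : Fin (k+1) × Fin q) (b : Fin q) => r (k+1+p.1.1) p.2 b) := rfl
        rw [this]
        rw [show (k+1)+(k+1) = 2*(k+1) by omega]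
        rw [sub_eq_neg_add]

/-- characterization of the odd Stieltjes parameters. -/
lemma char_odd (r : ℕ → Mq q) (k : ℕ) (hr : IsUnit (Kmat q r (k-1)).det) :
    ∃ v : ℕ → Mq q, Kmat q r k * BC q k v = emb q k * qOdd q r k ∧ v k = 1 := by
  match k with
  | 0 =>
      refine ⟨fun j => if j = 0 then 1 else 0, ?_, by simp⟩
      have h0 : Kmat q r 0 = BM q 0 (fun j a => r (j+a+1)) := rfl
      rw [h0, BM_mul_BC, emb_mul_M]
      refine BC_ext (fun j hj => ?_)
      interval_cases j
      rw [Finset.sum_range_one, if_pos rfl, if_pos rfl, mul_one, Nat.add_zero]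
      rfl
  | k+1 =>
      have hr' : IsUnit (Kmat q r k).det := hr
      set Y : Matrix (Fin (k+1) × Fin q) (Fin q) ℂ :=
        Matrix.of fun p b => r (k+2+p.1.1) p.2 b with hY
      set X : Matrix (Fin (k+1) × Fin q) (Fin q) ℂ := -((Kmat q r k)⁻¹ * Y) with hXdef
      refine ⟨fun j => if j ≤ k then mblkC q k X j else 1, ?_, by
        show (if k+1 ≤ k then mblkC q k X (k+1) else 1) = 1
        rw [if_neg (by omega)]⟩
      have hX : Kmat q r k * X = -Y := by
        rw [hXdef, Matrix.mul_neg, ← Matrix.mul_assoc, Matrix.mul_nonsing_inv _ hr',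
          Matrix.one_mul]
      have hXb : ∀ j, j ≤ k →
          ∑ a ∈ range (k+1), r (j+a+1) * mblkC q k X a = -(r (k+2+j)) := by
        intro j hj
        have h1 : Kmat q r k * BC q k (mblkC q k X) = BC q k (fun i => -(r (k+2+i))) := by
          rw [BC_repr, hX]
          rw [show -Y = BC q k (fun i => -(r (k+2+i))) from by
            rw [hY]; ext p b; simp [BC]]
        have h2 : Kmat q r k * BC q k (mblkC q k X)
            = BC q k (fun i => ∑ a ∈ range (k+1), r (i+a+1) * mblkC q k X a) := by
          have hH : Kmat q r k = BM q k (fun j a => r (j+a+1)) := rfl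
          rw [hH, BM_mul_BC]
        rw [h2] at h1
        exact BC_inj h1 hj
      have hZ : ∑ a ∈ range (k+1), r (k+2+a) * mblkC q k X a
          = -((Matrix.of fun (a : Fin q) (p : Fin (k+1) × Fin q) => r (k+2+p.1.1) a p.2) *
              (Kmat q r k)⁻¹ * Y) := by
        calc ∑ a ∈ range (k+1), r (k+2+a) * mblkC q k X a
            = BR q k (fun m => r (k+2+m)) * BC q k (mblkC q k X) :=
              (BR_mul_BC _ _).symm
          _ = BR q k (fun m => r (k+2+m)) * X := by rw [BC_repr]
          _ = _ := by rw [hXdef, Matrix.mul_neg, ← Matrix.mul_assoc]; rfl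
      have hH1 : Kmat q r (k+1) = BM q (k+1) (fun j a => r (j+a+1)) := rfl
      rw [hH1, BM_mul_BC, emb_mul_M]
      refine BC_ext (fun j hj => ?_)
      rw [Finset.sum_range_succ, if_neg (by omega : ¬ (k+1 : ℕ) ≤ k), mul_one]
      have hrest : ∑ a ∈ range (k+1), r (j+a+1) * (if a ≤ k then mblkC q k X a else 1)
          = ∑ a ∈ range (k+1), r (j+a+1) * mblkC q k X a := by
        refine Finset.sum_congr rfl (fun a ha => ?_)
        rw [if_pos (by simp only [Finset.mem_range, Nat.lt_succ_iff] at ha; exact ha)]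
      rw [hrest]
      by_cases hjk : j ≤ k
      · have hXb' : ∑ a ∈ range (k+1), r (j+a+1) * mblkC q k X a = -(r (k+2+j)) := hXb j hjk
        rw [hXb', if_neg (by omega)]
        rw [show j+(k+1)+1 = k+2+j by omega]
        exact neg_add_cancel _
      · have hjeq : j = k+1 := by omega
        subst hjeq
        rw [if_pos rfl]
        have hsum : ∑ a ∈ range (k+1), r (k+1+a+1) * mblkC q k X a
            = ∑ a ∈ range (k+1), r (k+2+a) * mblkC q k X a := by
          refine Finset.sum_congr rfl (fun a _ => ?_)
          rw [show k+1+a+1 = k+2+a by omega]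
        rw [hsum, hZ]
        have : qOdd q r (k+1)
            = r (2*(k+1)+1) -
              (Matrix.of fun (a : Fin q) (p : Fin (k+1) × Fin q) => r (k+2+p.1.1) a p.2) *
                (Kmat q r k)⁻¹ *
                (Matrix.of fun (p : Fin (k+1) × Fin q) (b : Fin q) => r (k+2+p.1.1) p.2 b) := rfl
        rw [this]
        rw [show (k+1)+(k+1)+1 = 2*(k+1)+1 by omega]
        rw [sub_eq_neg_add]

end SAux
namespace SAux
open Finset
variable {q : ℕ} (s : ℕ → Mq q) (hd0 : IsUnit (s 0).det)
include hd0

/-- transfer a characterization along the congruence `A = D B Dᴴ`. -/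
lemma transfer {n : ℕ} {v : ℕ → Mq q} {g : Mq q}
    {A B : Matrix (Fin (n+1) × Fin q) (Fin (n+1) × Fin q) ℂ}
    (hcong : A = Dm q s n * B * (Dm q s n)ᴴ)
    (hB : B * BC q n v = emb q n * g) (hv : v n = 1) :
    ∃ v' : ℕ → Mq q, A * BC q n v' = emb q n * g ∧ v' n = 1 := by
  refine ⟨fun j => ∑ a ∈ range (n+1), (ufun s a j)ᴴ * v a, ?_, ?_⟩
  · have hrepr : BC q n (fun j => ∑ a ∈ range (n+1), (ufun s a j)ᴴ * v a)
        = (Um q s n)ᴴ * BC q n v := by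
      rw [Um, BM_conjT, BM_mul_BC]
    rw [hrepr, hcong]
    calc (Dm q s n * B * (Dm q s n)ᴴ) * ((Um q s n)ᴴ * BC q n v)
        = Dm q s n * B * ((Dm q s n)ᴴ * (Um q s n)ᴴ) * BC q n v := by
          rw [Matrix.mul_assoc (Dm q s n * B), ← Matrix.mul_assoc ((Dm q s n)ᴴ),
            ← Matrix.mul_assoc]
      _ = Dm q s n * (B * BC q n v) := by
          rw [← Matrix.conjTranspose_mul, Um_mul_Dm s hd0, Matrix.conjTranspose_one,
            Matrix.mul_one, Matrix.mul_assoc]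
      _ = emb q n * g := by
          rw [hB, ← Matrix.mul_assoc, Dm_mul_emb s hd0]
  · show ∑ a ∈ range (n+1), (ufun s a n)ᴴ * v a = 1
    rw [Finset.sum_eq_single n (fun a ham ha => by
      rw [show ufun s a n = 0 from if_neg (by simp only [Finset.mem_range] at ham; omega),
        Matrix.conjTranspose_zero, zero_mul])
      (fun h => absurd (self_mem_range_succ n) h)]
    rw [show ufun s n n = s 0 * reciprocal q s 0 from by
        rw [show ufun s n n = if n ≤ n then s 0 * reciprocal q s (n-n) else 0 from rfl,
          if_pos le_rfl, Nat.sub_self],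
      recip_zero, Matrix.mul_nonsing_inv _ hd0, Matrix.conjTranspose_one, one_mul, hv]

/-- lift a characterization for the Schur complement `Gm` to `Hmat (k+1)`. -/
lemma lift {k : ℕ} {v : ℕ → Mq q} {g : Mq q}
    (hG : Gm q s k * BC q k v = emb q k * g) (hv : v k = 1) :
    ∃ w : ℕ → Mq q, Hmat q s (k+1) * BC q (k+1) w = emb q (k+1) * g ∧ w (k+1) = 1 := by
  have hGb : ∀ i, i ≤ k →
      ∑ a ∈ range (k+1), (fun j k' => s (j+k'+2) - s (j+1) * (s 0)⁻¹ * s (k'+1)) i a * v a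
        = if i = k then g else 0 := by
    intro i hi
    rw [Gm, BM_mul_BC, emb_mul_M] at hG
    exact BC_inj hG hi
  simp only [] at hGb
  set W : ℕ → Mq q := fun j => if j = 0 then -((s 0)⁻¹ * ∑ a ∈ range (k+1), s (a+1) * v a)
    else v (j-1) with hW
  have hWs : ∀ a, W (a+1) = v a := by intro a; rw [hW]; simp
  have hW0 : W 0 = -((s 0)⁻¹ * ∑ a ∈ range (k+1), s (a+1) * v a) := rfl
  refine ⟨W, ?_, by rw [hWs k, hv]⟩
  have hH : Hmat q s (k+1) = BM q (k+1) (fun j a => s (j+a)) := rfl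
  rw [hH, BM_mul_BC, emb_mul_M]
  refine BC_ext (fun j hj => ?_)
  rw [Finset.sum_range_succ' (fun a => s (j+a) * W a) (k+1)]
  have hterm : ∀ a, s (j+(a+1)) * W (a+1) = s (j+a+1) * v a := by
    intro a; rw [hWs a, show j+(a+1) = j+a+1 by omega]
  rw [Finset.sum_congr rfl (fun a _ => hterm a), Nat.add_zero, hW0]
  by_cases hj0 : j = 0
  · subst hj0
    rw [if_neg (by omega), Matrix.mul_neg, Matrix.mul_nonsing_inv_cancel_left _ _ hd0,
      Finset.sum_congr rfl (fun a _ => by rw [show 0+a+1 = a+1 by omega])]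
    exact add_neg_cancel _
  · obtain ⟨i, rfl⟩ : ∃ i, j = i+1 := ⟨j-1, by omega⟩
    have hik : i ≤ k := by omega
    rw [Matrix.mul_neg, ← Matrix.mul_assoc, Finset.mul_sum, ← sub_eq_add_neg,
      ← Finset.sum_sub_distrib]
    have hsub : ∀ a ∈ range (k+1),
        s (i+1+a+1) * v a - (s (i+1) * (s 0)⁻¹) * (s (a+1) * v a)
          = (s (i+a+2) - s (i+1) * (s 0)⁻¹ * s (a+1)) * v a := by
      intro a _
      rw [Matrix.sub_mul, show i+1+a+1 = i+a+2 by omega, ← Matrix.mul_assoc]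
    rw [Finset.sum_congr rfl hsub, hGb i hik]
    simp only [add_left_inj]

end SAux
namespace SAux
open Finset
variable {q : ℕ} (s : ℕ → Mq q)

lemma isUnit_of_mul_one_left {m : Type*} [Fintype m] [DecidableEq m]
    {A B : Matrix m m ℂ} (h : A * B = 1) : IsUnit A := by
  rw [Matrix.isUnit_iff_isUnit_det]
  exact IsUnit.of_mul_eq_one B.det (by rw [← Matrix.det_mul, h, Matrix.det_one])

lemma isUnit_of_mul_one_right {m : Type*} [Fintype m] [DecidableEq m]
    {A B : Matrix m m ℂ} (h : A * B = 1) : IsUnit B := by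
  rw [Matrix.isUnit_iff_isUnit_det]
  exact IsUnit.of_mul_eq_one A.det
    (by rw [mul_comm, ← Matrix.det_mul, h, Matrix.det_one])

lemma sum_two_point {M : Type*} [AddCommMonoid M] {n : ℕ} {f : ℕ → M} {i j : ℕ}
    (hij : i ≠ j) (hi : i < n) (hj : j < n)
    (hz : ∀ a, a < n → a ≠ i → a ≠ j → f a = 0) :
    ∑ a ∈ range n, f a = f i + f j := by
  rw [← Finset.sum_subset (show ({i, j} : Finset ℕ) ⊆ range n by
      intro x hx
      simp only [Finset.mem_insert, Finset.mem_singleton] at hx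
      rcases hx with rfl | rfl <;> simp [Finset.mem_range, hi, hj])
    (fun a ha hna => hz a (Finset.mem_range.1 ha)
      (fun h => hna (by simp [h])) (fun h => hna (by simp [h])))]
  exact Finset.sum_pair hij

def bdfun : ℕ → ℕ → Mq q := fun j k =>
  if j = 0 then (if k = 0 then s 0 else 0)
  else if k = 0 then 0 else s (j+k) - s j * (s 0)⁻¹ * s k

def lfun : ℕ → ℕ → Mq q := fun j k =>
  if j = k then 1 else if j = 0 ∧ 1 ≤ k then -((s 0)⁻¹ * s k) else 0

def lifun : ℕ → ℕ → Mq q := fun j k =>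
  if j = k then 1 else if j = 0 ∧ 1 ≤ k then (s 0)⁻¹ * s k else 0

lemma lfun_pos {j k : ℕ} (hj : j ≠ 0) : lfun s j k = if j = k then 1 else 0 := by
  unfold lfun
  split_ifs with h1 h2
  · rfl
  · exact absurd h2.1 hj
  · rfl

lemma lifun_pos {j k : ℕ} (hj : j ≠ 0) : lifun s j k = if j = k then 1 else 0 := by
  unfold lifun
  split_ifs with h1 h2
  · rfl
  · exact absurd h2.1 hj
  · rfl

lemma L_mul_Li (n : ℕ) : BM q n (lfun s) * BM q n (lifun s) = 1 := by
  rw [BM_mul_BM, one_BM]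
  refine BM_ext (fun j k hj hk => ?_)
  by_cases hj0 : j = 0
  · subst hj0
    by_cases hk0 : k = 0
    · subst hk0
      rw [Finset.sum_eq_single 0 (fun a ham ha => ?_) (fun h => absurd
        (Finset.mem_range.2 (by omega)) h)]
      · rw [show lfun s 0 0 = 1 from if_pos rfl, show lifun s 0 0 = 1 from if_pos rfl,
          one_mul, if_pos rfl]
      · rw [show lifun s a 0 = 0 from by
          unfold lifun; rw [if_neg (by omega), if_neg (by omega)], mul_zero]
    · rw [if_neg (by omega)]
      rw [sum_two_point (show (0:ℕ) ≠ k by omega) (by omega) (by omega)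
        (fun a ha h0 hk' => ?_)]
      · rw [show lfun s 0 0 = 1 from if_pos rfl, one_mul,
          show lifun s 0 k = (s 0)⁻¹ * s k from by
            unfold lifun; rw [if_neg (by omega), if_pos ⟨rfl, by omega⟩],
          show lfun s 0 k = -((s 0)⁻¹ * s k) from by
            unfold lfun; rw [if_neg (by omega), if_pos ⟨rfl, by omega⟩],
          show lifun s k k = 1 from if_pos rfl, mul_one]
        exact add_neg_cancel _
      · rw [show lifun s a k = 0 from by
          unfold lifun; rw [if_neg (by omega), if_neg (by omega)], mul_zero]
  · rw [Finset.sum_eq_single j (fun a ham ha => ?_) (fun h => absurd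
      (Finset.mem_range.2 (by omega)) h)]
    · rw [lfun_pos s hj0, if_pos rfl, one_mul, lifun_pos s hj0]
    · rw [lfun_pos s hj0, if_neg (fun h => ha h.symm), zero_mul]

variable (hd0 : IsUnit (s 0).det) (herm : ∀ m, (s m)ᴴ = s m)
include hd0 herm

omit hd0 in
lemma lfunT (a j : ℕ) :
    (lfun s a j)ᴴ = if a = j then 1 else if a = 0 ∧ 1 ≤ j then -(s j * (s 0)⁻¹) else 0 := by
  unfold lfun
  split_ifs with h1 h2
  · exact Matrix.conjTranspose_one
  · rw [Matrix.conjTranspose_neg, Matrix.conjTranspose_mul,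
      Matrix.conjTranspose_nonsing_inv, herm, herm]
  · exact Matrix.conjTranspose_zero

lemma BD_eq (n : ℕ) :
    BM q (n+1) (bdfun s)
      = (BM q (n+1) (lfun s))ᴴ * Hmat q s (n+1) * BM q (n+1) (lfun s) := by
  have hH : Hmat q s (n+1) = BM q (n+1) (fun j k => s (j+k)) := rfl
  rw [hH, BM_conjT, BM_mul_BM, BM_mul_BM]
  refine (BM_ext (fun j k hj hk => ?_)).symm
  have hin : ∀ b, ∑ a ∈ range (n+1+1), (lfun s a j)ᴴ * s (a+b)
      = if j = 0 then s b else s (j+b) - s j * (s 0)⁻¹ * s b := by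
    intro b
    by_cases hj0 : j = 0
    · subst hj0
      rw [if_pos rfl, Finset.sum_eq_single 0 (fun a ham ha => ?_) (fun h => absurd
        (Finset.mem_range.2 (by omega)) h)]
      · rw [lfunT s herm, if_pos rfl, one_mul, Nat.zero_add]
      · rw [lfunT s herm, if_neg (by omega), if_neg (by omega), zero_mul]
    · rw [if_neg hj0,
        sum_two_point (show (0:ℕ) ≠ j by omega) (by omega) (by omega)
          (fun a ha h0 hjj => ?_)]
      · rw [lfunT s herm, if_neg (by omega), if_pos ⟨rfl, by omega⟩,
          lfunT s herm, if_pos rfl, one_mul, Nat.zero_add,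
          Matrix.neg_mul, Matrix.mul_assoc, ← Matrix.mul_assoc]
        rw [add_comm, ← sub_eq_add_neg, Matrix.mul_assoc]
      · rw [lfunT s herm, if_neg hjj, if_neg (by omega), zero_mul]
  rw [Finset.sum_congr rfl (fun b _ => by rw [hin b])]
  by_cases hk0 : k = 0
  · subst hk0
    rw [Finset.sum_eq_single 0 (fun b hbm hb => ?_) (fun h => absurd
      (Finset.mem_range.2 (by omega)) h)]
    · rw [show lfun s 0 0 = 1 from if_pos rfl, mul_one]
      by_cases hj0 : j = 0
      · subst hj0; rw [if_pos rfl]; rfl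
      · rw [if_neg hj0]
        unfold bdfun
        rw [if_neg hj0, if_pos rfl, Nat.add_zero,
          Matrix.nonsing_inv_mul_cancel_right _ _ hd0, sub_self]
    · rw [show lfun s b 0 = 0 from by
        unfold lfun; rw [if_neg (by omega), if_neg (by omega)], mul_zero]
  · rw [sum_two_point (show (0:ℕ) ≠ k by omega) (by omega) (by omega)
      (fun b hb h0 hkk => ?_)]
    · rw [show lfun s 0 k = -((s 0)⁻¹ * s k) from by
          unfold lfun; rw [if_neg (by omega), if_pos ⟨rfl, by omega⟩],
        show lfun s k k = 1 from if_pos rfl, mul_one]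
      by_cases hj0 : j = 0
      · subst hj0
        rw [if_pos rfl, if_pos rfl]
        unfold bdfun
        rw [if_pos rfl, if_neg hk0,
          Matrix.mul_neg, Matrix.mul_nonsing_inv_cancel_left _ _ hd0, neg_add_cancel]
      · rw [if_neg hj0, if_neg hj0]
        unfold bdfun
        rw [if_neg hj0, if_neg hk0, Nat.add_zero,
          Matrix.nonsing_inv_mul_cancel_right _ _ hd0, sub_self, zero_mul, zero_add]
    · rw [show lfun s b k = 0 from by
        unfold lfun; rw [if_neg (by omega), if_neg (by omega)], mul_zero]

lemma Gm_det_isUnit (n : ℕ) (hH : IsUnit (Hmat q s (n+1)).det) :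
    IsUnit (Gm q s n).det := by
  have hL : IsUnit (BM q (n+1) (lfun s)) := isUnit_of_mul_one_left (L_mul_Li s (n+1))
  have hLT : IsUnit (BM q (n+1) (lfun s))ᴴ := by
    have h := congrArg Matrix.conjTranspose (L_mul_Li s (n+1))
    rw [Matrix.conjTranspose_mul, Matrix.conjTranspose_one] at h
    exact isUnit_of_mul_one_right h
  have hBD : IsUnit (BM q (n+1) (bdfun s)) := by
    rw [BD_eq s hd0 herm n]
    exact (hLT.mul ((Matrix.isUnit_iff_isUnit_det _).2 hH)).mul hL
  obtain ⟨u, hu⟩ := hBD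
  have hBC : BM q (n+1) (bdfun s) * u⁻¹.val = 1 := by
    rw [← hu]; exact u.mul_inv
  set C := u⁻¹.val with hC
  have hCrep : C = BM q (n+1) (mblkM q (n+1) C) := (BM_repr C).symm
  rw [hCrep, BM_mul_BM, one_BM] at hBC
  have hright : Gm q s n * BM q n (fun a k => mblkM q (n+1) C (a+1) (k+1)) = 1 := by
    rw [Gm, BM_mul_BM, one_BM]
    refine BM_ext (fun j k hj hk => ?_)
    have h1 := BM_inj hBC (show j+1 ≤ n+1 by omega) (show k+1 ≤ n+1 by omega)
    rw [Finset.sum_range_succ' _ (n+1)] at h1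
    rw [show bdfun s (j+1) 0 = 0 from by
      unfold bdfun; rw [if_neg (by omega), if_pos rfl], zero_mul, add_zero] at h1
    have h2 : ∀ a, bdfun s (j+1) (a+1) = s (j+a+2) - s (j+1) * (s 0)⁻¹ * s (a+1) := by
      intro a
      unfold bdfun
      rw [if_neg (by omega), if_neg (by omega), show j+1+(a+1) = j+a+2 by omega]
    rw [Finset.sum_congr rfl (fun a _ => by rw [h2 a])] at h1
    rw [h1]
    by_cases hjk : j = k
    · rw [if_pos hjk, if_pos (by omega)]
    · rw [if_neg hjk, if_neg (by omega)]
  exact (Matrix.isUnit_iff_isUnit_det _).1 (isUnit_of_mul_one_left hright)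

end SAux
open SAux Finset in
/-- `L_k^{(1)} = Λ_k` and `Λ_k^{(1)} = L_{k+1}`. -/
theorem stmt1 (q : ℕ) (hq : 1 ≤ q) (s : ℕ → Mq q) (hs : IsStieltjesPD q s) (k : ℕ) :
    qEven q (katetov q 1 s) k = qOdd q s k ∧
      qOdd q (katetov q 1 s) k = qEven q s (k + 1) := by
  have hkat : katetov q 1 s = katetov1 q s := by
    rw [katetov, Function.iterate_one]
  -- each s_m is Hermitian
  have hermm : ∀ m, (s m)ᴴ = s m := by
    intro m
    have h := (hs m).1.1
    ext x y
    have h2 := congrFun (congrFun h ((⟨m, by omega⟩ : Fin (m+1)), x))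
      ((⟨0, by omega⟩ : Fin (m+1)), y)
    simp only [Hmat, Matrix.conjTranspose_apply, Matrix.of_apply, Nat.zero_add,
      Nat.add_zero] at h2
    simpa [Matrix.conjTranspose_apply] using h2
  -- determinant facts
  have hHdet : ∀ n, IsUnit (Hmat q s n).det :=
    fun n => (Matrix.isUnit_iff_isUnit_det _).1 (hs n).1.isUnit
  have hKdet : ∀ n, IsUnit (Kmat q s n).det :=
    fun n => (Matrix.isUnit_iff_isUnit_det _).1 (hs n).2.isUnit
  have hd0 : IsUnit (s 0).det := by
    have h := hHdet 0
    let e : Fin 1 × Fin q ≃ Fin q :=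
      ⟨fun p => p.2, fun x => (⟨0, by omega⟩, x),
        fun p => by
          obtain ⟨a, x⟩ := p
          exact Prod.ext (Subsingleton.elim _ _) rfl,
        fun x => rfl⟩
    have he : Hmat q s 0 = (s 0).submatrix e e := by
      ext ⟨⟨j, hj⟩, x⟩ ⟨⟨kk, hk⟩, y⟩
      simp [Hmat, Matrix.submatrix_apply, e, show j = 0 by omega, show kk = 0 by omega]
    rw [he, Matrix.det_submatrix_equiv_self] at h
    exact h
  -- invertibility of the Hankel matrices of the transform
  have hHt : ∀ n, IsUnit (Hmat q (katetov1 q s) n).det := by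
    intro n
    have h1 := I1 s hd0 hermm n
    have h2 : (Kmat q s n).det
        = (Dm q s n).det * (Hmat q (katetov1 q s) n).det * ((Dm q s n)ᴴ).det := by
      rw [h1, Matrix.det_mul, Matrix.det_mul]
    have h3 := hKdet n
    rw [h2] at h3
    exact isUnit_of_mul_isUnit_right (isUnit_of_mul_isUnit_left h3)
  have hGdet : ∀ n, IsUnit (Gm q s n).det :=
    fun n => Gm_det_isUnit s hd0 hermm n (hHdet (n+1))
  have hKt : ∀ n, IsUnit (Kmat q (katetov1 q s) n).det := by
    intro n
    have h1 := I2 s hd0 hermm n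
    have h2 : (Gm q s n).det
        = (Dm q s n).det * (Kmat q (katetov1 q s) n).det * ((Dm q s n)ᴴ).det := by
      rw [h1, Matrix.det_mul, Matrix.det_mul]
    have h3 := hGdet n
    rw [h2] at h3
    exact isUnit_of_mul_isUnit_right (isUnit_of_mul_isUnit_left h3)
  rw [hkat]
  constructor
  · -- part 1 : qEven of the transform equals qOdd
    obtain ⟨v, hv, hv1⟩ := char_even (katetov1 q s) k (hHt (k-1))
    obtain ⟨v'', hv'', hv1''⟩ := transfer s hd0 (I1 s hd0 hermm k) hv hv1
    obtain ⟨v', hv', hv1'⟩ := char_odd s k (hKdet (k-1))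
    exact uniq (hs k).2.1 hv'' (by rw [embT_mul_BC, hv1'']) hv' (by rw [embT_mul_BC, hv1'])
  · -- part 2 : qOdd of the transform equals qEven shifted
    obtain ⟨v, hv, hv1⟩ := char_odd (katetov1 q s) k (hKt (k-1))
    obtain ⟨v', hv', hv1'⟩ := transfer s hd0 (I2 s hd0 hermm k) hv hv1
    obtain ⟨w, hw, hw1⟩ := lift s hd0 hv' hv1'
    obtain ⟨w', hw', hw1'⟩ := char_even s (k+1) (hHdet k)
    exact uniq (hs (k+1)).1.1 hw (by rw [embT_mul_BC, hw1]) hw' (by rw [embT_mul_BC, hw1'])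

end
end

section
/- Let q ≥ 1 be an integer and let (s_j)_{j=0}^∞ be a Stieltjes positive definite sequence of complex q×q matrices with Dyukarev–Stieltjes parameters [(𝔏_k)_{k=0}^∞, (𝔐_k)_{k=0}^∞]. Then the Dyukarev–Stieltjes parameters [(𝔏_k^{(1)})_{k=0}^∞, (𝔐_k^{(1)})_{k=0}^∞] of the first Kátětov transform (s_j^{(1)})_{j=0}^∞ are given by 𝔏_k^{(1)} = s_0 · 𝔐_{k+1} · s_0 and 𝔐_k^{(1)} = s_0^{−1} · 𝔏_k · s_0^{−1} for all k ∈ ℕ₀. -/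
open Matrix
open scoped ComplexOrder

noncomputable section

namespace DSAux

open Finset

variable {q : ℕ}

/-! ### sequence-level convolution lemmas -/

lemma recip_succ (s : ℕ → Mq q) (j : ℕ) :
    reciprocal q s (j + 1) =
      -(s 0)⁻¹ * ∑ l ∈ Finset.range (j + 1), s (j + 1 - l) * reciprocal q s l := by
  rw [reciprocal]
  congr 1
  exact Finset.sum_attach (Finset.range (j + 1))
    (fun l => s (j + 1 - l) * reciprocal q s l)

lemma recip_zero (s : ℕ → Mq q) : reciprocal q s 0 = (s 0)⁻¹ := by
  rw [reciprocal]

lemma conv1 (s : ℕ → Mq q) (hu : IsUnit (s 0).det) (d : ℕ) :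
    ∑ l ∈ Finset.range (d + 1), s (d - l) * reciprocal q s l
      = if d = 0 then 1 else 0 := by
  cases d with
  | zero =>
      simp [recip_zero, Matrix.mul_nonsing_inv _ hu]
  | succ j =>
      rw [Finset.sum_range_succ]
      have h1 : s (j + 1 - (j + 1)) = s 0 := by norm_num
      rw [h1, recip_succ, neg_mul, mul_neg,
        Matrix.mul_nonsing_inv_cancel_left _ _ hu]
      simp

lemma conv1' (s : ℕ → Mq q) (hu : IsUnit (s 0).det) (d : ℕ) :
    ∑ l ∈ Finset.range (d + 1), s l * reciprocal q s (d - l)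
      = if d = 0 then 1 else 0 := by
  rw [← conv1 s hu d, ← Finset.sum_range_reflect]
  refine Finset.sum_congr rfl fun l hl => ?_
  have hld : l ≤ d := Nat.lt_succ_iff.mp (Finset.mem_range.mp hl)
  have h1 : d + 1 - 1 - l = d - l := by omega
  have h2 : d - (d - l) = l := by omega
  rw [h1, h2]

/-! ### block matrix infrastructure -/

def blk (q n : ℕ) (f : ℕ → ℕ → Mq q) :
    Matrix (Fin (n + 1) × Fin q) (Fin (n + 1) × Fin q) ℂ :=
  Matrix.of fun p r => f p.1.1 r.1.1 p.2 r.2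

def bcol (q n : ℕ) (f : ℕ → Mq q) :
    Matrix (Fin (n + 1) × Fin q) (Fin q) ℂ :=
  Matrix.of fun p b => f p.1.1 p.2 b

def brow (q n : ℕ) (f : ℕ → Mq q) :
    Matrix (Fin q) (Fin (n + 1) × Fin q) ℂ :=
  Matrix.of fun a r => f r.1.1 a r.2

lemma blk_congr {n : ℕ} {f g : ℕ → ℕ → Mq q}
    (h : ∀ i k, i < n + 1 → k < n + 1 → f i k = g i k) : blk q n f = blk q n g := by
  ext p r
  rw [blk, blk, Matrix.of_apply, Matrix.of_apply, h _ _ p.1.2 r.1.2]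

lemma bcol_congr {n : ℕ} {f g : ℕ → Mq q}
    (h : ∀ i, i < n + 1 → f i = g i) : bcol q n f = bcol q n g := by
  ext p b
  rw [bcol, bcol, Matrix.of_apply, Matrix.of_apply, h _ p.1.2]

lemma blk_ext {n : ℕ} {f g : ℕ → ℕ → Mq q} (h : blk q n f = blk q n g)
    (i k : ℕ) (hi : i < n + 1) (hk : k < n + 1) : f i k = g i k := by
  ext a b
  exact congrFun (congrFun h (⟨i, hi⟩, a)) (⟨k, hk⟩, b)

lemma blk_mul (n : ℕ) (f g : ℕ → ℕ → Mq q) :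
    blk q n f * blk q n g
      = blk q n fun i k => ∑ j ∈ Finset.range (n + 1), f i j * g j k := by
  ext p r
  simp only [blk, Matrix.mul_apply, Matrix.of_apply, Matrix.sum_apply]
  rw [Fintype.sum_prod_type,
    ← Fin.sum_univ_eq_sum_range
      (fun j => ∑ y : Fin q, f p.1.1 j p.2 y * g j r.1.1 y r.2) (n + 1)]

lemma blk_mul_bcol (n : ℕ) (f : ℕ → ℕ → Mq q) (g : ℕ → Mq q) :
    blk q n f * bcol q n g
      = bcol q n fun i => ∑ j ∈ Finset.range (n + 1), f i j * g j := by
  ext p b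
  simp only [blk, bcol, Matrix.mul_apply, Matrix.of_apply, Matrix.sum_apply]
  rw [Fintype.sum_prod_type,
    ← Fin.sum_univ_eq_sum_range
      (fun j => ∑ y : Fin q, f p.1.1 j p.2 y * g j y b) (n + 1)]

lemma bcol_mul_right (n : ℕ) (f : ℕ → Mq q) (B : Mq q) :
    bcol q n f * B = bcol q n fun i => f i * B := by
  ext p b
  simp only [bcol, Matrix.mul_apply, Matrix.of_apply]

lemma bcol_mul_brow (n : ℕ) (f : ℕ → Mq q) (B : Mq q) (g : ℕ → Mq q) :
    bcol q n f * B * brow q n g = blk q n fun i j => f i * B * g j := by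
  ext p r
  simp only [bcol, brow, blk, Matrix.mul_apply, Matrix.of_apply]

lemma blk_conjT (n : ℕ) (f : ℕ → ℕ → Mq q) :
    (blk q n f)ᴴ = blk q n fun i j => (f j i)ᴴ := by
  ext p r
  simp [blk, Matrix.conjTranspose_apply]

lemma bcol_conjT (n : ℕ) (f : ℕ → Mq q) :
    (bcol q n f)ᴴ = brow q n fun i => (f i)ᴴ := by
  ext a r
  simp [bcol, brow, Matrix.conjTranspose_apply]

lemma blk_one (n : ℕ) :
    blk q n (fun i k => if i = k then 1 else 0) = 1 := by
  ext ⟨i, a⟩ ⟨k, b⟩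
  simp only [blk, Matrix.of_apply, Matrix.one_apply, Prod.mk.injEq]
  by_cases h : (i : ℕ) = (k : ℕ)
  · have : i = k := Fin.ext h
    simp [h, this, Matrix.one_apply]
  · have : ¬ i = k := fun hh => h (congrArg Fin.val hh)
    simp [h, this]

lemma blk_sub (n : ℕ) (f g : ℕ → ℕ → Mq q) :
    blk q n f - blk q n g = blk q n fun i k => f i k - g i k := by
  ext p r
  simp [blk]

/-! ### sum helpers -/

lemma sum_if_le {M : Type*} [AddCommMonoid M] (N i : ℕ) (hi : i < N) (g : ℕ → M) :
    ∑ j ∈ Finset.range N, (if j ≤ i then g j else 0)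
      = ∑ j ∈ Finset.range (i + 1), g j := by
  rw [← Finset.sum_subset (Finset.range_subset_range.mpr hi)
    (fun x _ hnx => if_neg fun h =>
      hnx (Finset.mem_range.mpr (Nat.lt_succ_iff.mpr h)))]
  exact Finset.sum_congr rfl fun j hj =>
    if_pos (Nat.lt_succ_iff.mp (Finset.mem_range.mp hj))

lemma sum_band {M : Type*} [AddCommMonoid M] (N i k : ℕ) (hi : i < N) (g : ℕ → M) :
    ∑ j ∈ Finset.range N, (if k ≤ j ∧ j ≤ i then g j else 0)
      = if k ≤ i then ∑ l ∈ Finset.range (i - k + 1), g (k + l) else 0 := by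
  have h1 : ∑ j ∈ Finset.range N, (if k ≤ j ∧ j ≤ i then g j else 0)
      = ∑ j ∈ Finset.range N, (if j ∈ Finset.Icc k i then g j else 0) :=
    Finset.sum_congr rfl fun j _ => by simp only [Finset.mem_Icc]
  have h2 : Finset.range N ∩ Finset.Icc k i = Finset.Icc k i :=
    Finset.inter_eq_right.mpr fun x hx =>
      Finset.mem_range.mpr (by have := Finset.mem_Icc.mp hx; omega)
  rw [h1, Finset.sum_ite_mem, h2]
  by_cases hk : k ≤ i
  · rw [if_pos hk]
    have : Finset.Icc k i = Finset.Ico k (i + 1) := rfl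
    rw [this, Finset.sum_Ico_eq_sum_range, show i + 1 - k = i - k + 1 by omega]
  · rw [if_neg hk, Finset.Icc_eq_empty (by omega), Finset.sum_empty]

/-- triangle reindexing -/
lemma tri {M : Type*} [AddCommMonoid M] (n : ℕ) (f : ℕ → ℕ → M) :
    ∑ b ∈ Finset.range (n + 1), ∑ m ∈ Finset.range (b + 1), f b m
      = ∑ m ∈ Finset.range (n + 1), ∑ c ∈ Finset.range (n + 1 - m), f (m + c) m := by
  have h1 : ∑ b ∈ Finset.range (n + 1), ∑ m ∈ Finset.range (b + 1), f b m
      = ∑ b ∈ Finset.range (n + 1), ∑ m ∈ Finset.range (n + 1),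
          (if m ≤ b then f b m else 0) := by
    refine Finset.sum_congr rfl fun b hb => ?_
    rw [sum_if_le (n + 1) b (Finset.mem_range.mp hb)]
  rw [h1, Finset.sum_comm]
  refine Finset.sum_congr rfl fun m hm => ?_
  have h3 : ∑ b ∈ Finset.range (n + 1), (if m ≤ b then f b m else 0)
      = ∑ b ∈ Finset.Ico m (n + 1), f b m := by
    have h4 : ∑ j ∈ Finset.range (n + 1), (if m ≤ j then f j m else 0)
        = ∑ j ∈ Finset.range (n + 1), (if j ∈ Finset.Ico m (n + 1) then f j m else 0) :=
      Finset.sum_congr rfl fun j hj => by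
        have hj' := Finset.mem_range.mp hj
        simp only [Finset.mem_Ico]
        by_cases h : m ≤ j
        · rw [if_pos h, if_pos ⟨h, hj'⟩]
        · rw [if_neg h, if_neg (fun hh => h hh.1)]
    rw [h4, Finset.sum_ite_mem, Finset.inter_eq_right.mpr
      (fun x hx => Finset.mem_range.mpr (Finset.mem_Ico.mp hx).2)]
  rw [h3, Finset.sum_Ico_eq_sum_range]

/-- symmetric triangle swap -/
lemma tri2 {M : Type*} [AddCommMonoid M] (n : ℕ) (g : ℕ → ℕ → M) :
    ∑ m ∈ Finset.range (n + 1), ∑ c ∈ Finset.range (n + 1 - m), g m c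
      = ∑ c ∈ Finset.range (n + 1), ∑ m ∈ Finset.range (n + 1 - c), g m c := by
  have key : ∀ h : ℕ → ℕ → M,
      ∑ m ∈ Finset.range (n + 1), ∑ c ∈ Finset.range (n + 1 - m), h m c
        = ∑ m ∈ Finset.range (n + 1), ∑ c ∈ Finset.range (n + 1),
            (if m + c ≤ n then h m c else 0) := by
    intro h
    refine Finset.sum_congr rfl fun m hm => ?_
    have hm' := Finset.mem_range.mp hm
    have : ∑ c ∈ Finset.range (n + 1), (if m + c ≤ n then h m c else 0)
        = ∑ c ∈ Finset.range (n + 1), (if c ≤ n - m then h m c else 0) :=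
      Finset.sum_congr rfl fun c _ => by
        by_cases hc : m + c ≤ n
        · rw [if_pos hc, if_pos (by omega)]
        · rw [if_neg hc, if_neg (by omega)]
    rw [this, sum_if_le (n + 1) (n - m) (by omega),
      show n - m + 1 = n + 1 - m by omega]
  rw [key, key fun m c => g c m, Finset.sum_comm]
  exact Finset.sum_congr rfl fun y _ => Finset.sum_congr rfl fun x _ => by
    rw [Nat.add_comm x y]

/-! ### Toeplitz matrices -/

def Wt (q : ℕ) (s : ℕ → Mq q) (n : ℕ) :
    Matrix (Fin (n + 1) × Fin q) (Fin (n + 1) × Fin q) ℂ :=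
  blk q n fun i j => if j ≤ i then s 0 * reciprocal q s (i - j) else 0

def Vt (q : ℕ) (s : ℕ → Mq q) (n : ℕ) :
    Matrix (Fin (n + 1) × Fin q) (Fin (n + 1) × Fin q) ℂ :=
  blk q n fun i j => if j ≤ i then s (i - j) * (s 0)⁻¹ else 0

lemma toep_mul (n : ℕ) (f g : ℕ → Mq q) :
    blk q n (fun i j => if j ≤ i then f (i - j) else 0) *
        blk q n (fun i j => if j ≤ i then g (i - j) else 0)
      = blk q n fun i k =>
          if k ≤ i then ∑ l ∈ Finset.range (i - k + 1), f (i - k - l) * g l else 0 := by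
  rw [blk_mul]
  refine blk_congr fun i k hi hk => ?_
  have h1 : ∀ j, (if j ≤ i then f (i - j) else 0) * (if k ≤ j then g (j - k) else 0)
      = if k ≤ j ∧ j ≤ i then f (i - j) * g (j - k) else 0 := fun j => by
    by_cases h1 : j ≤ i <;> by_cases h2 : k ≤ j <;> simp [h1, h2]
  rw [Finset.sum_congr rfl fun j _ => h1 j, sum_band (n + 1) i k hi]
  by_cases hk2 : k ≤ i
  · rw [if_pos hk2, if_pos hk2]
    exact Finset.sum_congr rfl fun l _ => by
      rw [show i - (k + l) = i - k - l by omega, show k + l - k = l by omega]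
  · rw [if_neg hk2, if_neg hk2]

lemma VW_one (s : ℕ → Mq q) (hu : IsUnit (s 0).det) (n : ℕ) :
    Vt q s n * Wt q s n = 1 := by
  rw [Vt, Wt, toep_mul n (fun m => s m * (s 0)⁻¹) (fun m => s 0 * reciprocal q s m),
    ← blk_one]
  refine blk_congr fun i k hi hk => ?_
  by_cases hk2 : k ≤ i
  · rw [if_pos hk2]
    have h2 : ∀ l, s (i - k - l) * (s 0)⁻¹ * (s 0 * reciprocal q s l)
        = s (i - k - l) * reciprocal q s l := fun l => by
      rw [Matrix.mul_assoc, Matrix.nonsing_inv_mul_cancel_left _ _ hu]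
    rw [Finset.sum_congr rfl fun l _ => h2 l, conv1 s hu (i - k)]
    by_cases h3 : i = k
    · rw [if_pos (by omega), if_pos h3]
    · rw [if_neg (by omega), if_neg h3]
  · rw [if_neg hk2, if_neg (fun h => hk2 (le_of_eq h.symm))]

lemma WV_one (s : ℕ → Mq q) (hu : IsUnit (s 0).det) (n : ℕ) :
    Wt q s n * Vt q s n = 1 :=
  mul_eq_one_comm.mp (VW_one s hu n)

lemma conv2 (s : ℕ → Mq q) (hu : IsUnit (s 0).det) (d : ℕ) :
    ∑ l ∈ Finset.range (d + 1), reciprocal q s (d - l) * s l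
      = if d = 0 then 1 else 0 := by
  have h := WV_one s hu d
  rw [Wt, Vt, toep_mul d (fun m => s 0 * reciprocal q s m) (fun m => s m * (s 0)⁻¹),
    ← blk_one] at h
  have h2 := blk_ext h d 0 (by omega) (by omega)
  rw [if_pos (Nat.zero_le d), Nat.sub_zero] at h2
  have h3 : ∑ l ∈ Finset.range (d + 1), s 0 * reciprocal q s (d - l) * (s l * (s 0)⁻¹)
      = s 0 * (∑ l ∈ Finset.range (d + 1), reciprocal q s (d - l) * s l) * (s 0)⁻¹ := by
    rw [Finset.mul_sum, Finset.sum_mul]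
    exact Finset.sum_congr rfl fun l _ => by
      simp only [Matrix.mul_assoc]
  rw [h3] at h2
  have h4 : ∑ l ∈ Finset.range (d + 1), reciprocal q s (d - l) * s l
      = (s 0)⁻¹ * (s 0 * (∑ l ∈ Finset.range (d + 1), reciprocal q s (d - l) * s l) *
          (s 0)⁻¹) * s 0 := by
    rw [Matrix.mul_assoc (s 0) _ (s 0)⁻¹, Matrix.nonsing_inv_mul_cancel_left _ _ hu,
      Matrix.nonsing_inv_mul_cancel_right _ _ hu]
  rw [h4, h2]
  by_cases h5 : d = 0
  · rw [if_pos h5, Matrix.mul_one, Matrix.nonsing_inv_mul _ hu]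
  · rw [if_neg h5, Matrix.mul_zero, Matrix.zero_mul]

lemma conv2' (s : ℕ → Mq q) (hu : IsUnit (s 0).det) (d : ℕ) :
    ∑ l ∈ Finset.range (d + 1), reciprocal q s l * s (d - l)
      = if d = 0 then 1 else 0 := by
  rw [← conv2 s hu d, ← Finset.sum_range_reflect]
  refine Finset.sum_congr rfl fun l hl => ?_
  have hld : l ≤ d := Nat.lt_succ_iff.mp (Finset.mem_range.mp hl)
  rw [show d + 1 - 1 - l = d - l by omega, show d - (d - l) = l by omega]

/-! ### hermitian facts -/

def eOne (q : ℕ) : (Fin 1 × Fin q) ≃ Fin q where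
  toFun := Prod.snd
  invFun a := (0, a)
  left_inv p := by
    cases p with
    | mk a b => exact congrArg (·, b) (Subsingleton.elim (0 : Fin 1) a)
  right_inv a := rfl

lemma herm_s (s : ℕ → Mq q) (hs : IsStieltjesPD q s) (j : ℕ) : (s j)ᴴ = s j := by
  have h := (hs j).1.isHermitian
  ext a b
  have h2 := congrFun (congrFun h ((⟨0, Nat.succ_pos j⟩ : Fin (j + 1)), a))
    ((⟨j, Nat.lt_succ_self j⟩ : Fin (j + 1)), b)
  simp only [Hmat, Matrix.conjTranspose_apply, Matrix.of_apply] at h2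
  simpa using h2

lemma s0_det (s : ℕ → Mq q) (hs : IsStieltjesPD q s) : IsUnit (s 0).det := by
  have hpd : (Hmat q s 0).PosDef := (hs 0).1
  have heq : Hmat q s 0 = (s 0).submatrix ⇑(eOne q) ⇑(eOne q) := by
    ext p r
    have h1 : (p.1 : ℕ) = 0 := Nat.lt_one_iff.mp p.1.isLt
    have h2 : (r.1 : ℕ) = 0 := Nat.lt_one_iff.mp r.1.isLt
    simp [Hmat, Matrix.submatrix_apply, eOne, h1, h2]
  have : (Hmat q s 0).det = (s 0).det := by
    rw [heq, Matrix.det_submatrix_equiv_self]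
  rw [← this]
  exact hpd.det_pos.ne'.isUnit

lemma hdetH (s : ℕ → Mq q) (hs : IsStieltjesPD q s) (n : ℕ) :
    IsUnit (Hmat q s n).det := (hs n).1.det_pos.ne'.isUnit

lemma hdetK (s : ℕ → Mq q) (hs : IsStieltjesPD q s) (n : ℕ) :
    IsUnit (Kmat q s n).det := (hs n).2.det_pos.ne'.isUnit

lemma herm_r (s : ℕ → Mq q) (hs : IsStieltjesPD q s) :
    ∀ j, (reciprocal q s j)ᴴ = reciprocal q s j := by
  have hu := s0_det s hs
  intro j
  induction j using Nat.strong_induction_on with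
  | _ j ih =>
    match j with
    | 0 => rw [recip_zero, Matrix.conjTranspose_nonsing_inv, herm_s s hs 0]
    | d + 1 =>
      have hconv : ∑ l ∈ Finset.range (d + 1), reciprocal q s l * s (d + 1 - l)
          = -(reciprocal q s (d + 1) * s 0) := by
        have h := conv2' s hu (d + 1)
        rw [Finset.sum_range_succ, if_neg (Nat.succ_ne_zero d)] at h
        have h2 : d + 1 - (d + 1) = 0 := by omega
        rw [h2] at h
        linear_combination (norm := module) h
      have hherm : (∑ l ∈ Finset.range (d + 1), s (d + 1 - l) * reciprocal q s l)ᴴ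
          = ∑ l ∈ Finset.range (d + 1), reciprocal q s l * s (d + 1 - l) := by
        rw [Matrix.conjTranspose_sum]
        exact Finset.sum_congr rfl fun l hl => by
          rw [Matrix.conjTranspose_mul, ih l (by
            exact Nat.lt_succ_of_le (Nat.lt_succ_iff.mp (Finset.mem_range.mp hl))),
            herm_s s hs]
      rw [recip_succ, Matrix.conjTranspose_mul, Matrix.conjTranspose_neg,
        Matrix.conjTranspose_nonsing_inv, herm_s s hs 0, hherm, hconv]
      rw [mul_neg, neg_mul, neg_neg, Matrix.mul_nonsing_inv_cancel_right _ _ hu]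
      exact recip_succ s d

/-! ### key convolution identities -/

lemma rowConv (s : ℕ → Mq q) (hu : IsUnit (s 0).det) (j : ℕ) :
    ∑ a ∈ Finset.range (j + 1), reciprocal q s (j - a) * s (a + 1)
      = -(reciprocal q s (j + 1) * s 0) := by
  have h := conv2 s hu (j + 1)
  rw [if_neg (Nat.succ_ne_zero j), Finset.sum_range_succ'] at h
  have h2 : ∑ a ∈ Finset.range (j + 1), reciprocal q s (j + 1 - (a + 1)) * s (a + 1)
      = ∑ a ∈ Finset.range (j + 1), reciprocal q s (j - a) * s (a + 1) :=
    Finset.sum_congr rfl fun a _ => by rw [show j + 1 - (a + 1) = j - a by omega]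
  rw [h2, show j + 1 - 0 = j + 1 by omega] at h
  linear_combination (norm := module) h

lemma colConv (s : ℕ → Mq q) (hu : IsUnit (s 0).det) (k : ℕ) :
    ∑ b ∈ Finset.range (k + 1), s (b + 1) * reciprocal q s (k - b)
      = -(s 0 * reciprocal q s (k + 1)) := by
  have h := conv1' s hu (k + 1)
  rw [if_neg (Nat.succ_ne_zero k), Finset.sum_range_succ'] at h
  have h2 : ∑ b ∈ Finset.range (k + 1), s (b + 1) * reciprocal q s (k + 1 - (b + 1))
      = ∑ b ∈ Finset.range (k + 1), s (b + 1) * reciprocal q s (k - b) :=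
    Finset.sum_congr rfl fun b _ => by rw [show k + 1 - (b + 1) = k - b by omega]
  rw [h2, show k + 1 - 0 = k + 1 by omega] at h
  linear_combination (norm := module) h

lemma innerStep (s : ℕ → Mq q) (hu : IsUnit (s 0).det) (j b : ℕ) :
    ∑ a ∈ Finset.range (j + 1), reciprocal q s (j - a) * s (a + b + 1)
      = -∑ m ∈ Finset.range (b + 1), reciprocal q s (j + b + 1 - m) * s m := by
  have h := conv2 s hu (j + b + 1)
  rw [if_neg (by omega)] at h
  have hsplit := Finset.sum_Ico_consecutive
    (fun l => reciprocal q s (j + b + 1 - l) * s l)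
    (Nat.zero_le (b + 1)) (show b + 1 ≤ j + b + 2 by omega)
  rw [← Finset.range_eq_Ico] at hsplit
  have h2 : ∑ l ∈ Finset.Ico (b + 1) (j + b + 2),
        reciprocal q s (j + b + 1 - l) * s l
      = ∑ a ∈ Finset.range (j + 1), reciprocal q s (j - a) * s (a + b + 1) := by
    rw [Finset.sum_Ico_eq_sum_range, show j + b + 2 - (b + 1) = j + 1 by omega]
    exact Finset.sum_congr rfl fun a _ => by
      rw [show j + b + 1 - (b + 1 + a) = j - a by omega,
        show b + 1 + a = a + b + 1 by omega]
  rw [h2] at hsplit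
  rw [show j + b + 1 + 1 = j + b + 2 by omega] at h
  rw [← Finset.range_eq_Ico, h] at hsplit
  linear_combination (norm := module) hsplit

lemma bigSum (s : ℕ → Mq q) (hu : IsUnit (s 0).det) (j k : ℕ) :
    ∑ a ∈ Finset.range (j + 1), ∑ b ∈ Finset.range (k + 1),
        reciprocal q s (j - a) * s (a + b + 1) * reciprocal q s (k - b)
      = -reciprocal q s (j + k + 1) := by
  rw [Finset.sum_comm]
  have step1 : ∀ b ∈ Finset.range (k + 1),
      ∑ a ∈ Finset.range (j + 1),
          reciprocal q s (j - a) * s (a + b + 1) * reciprocal q s (k - b)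
        = -∑ m ∈ Finset.range (b + 1),
            reciprocal q s (j + b + 1 - m) * s m * reciprocal q s (k - b) := by
    intro b _
    rw [← Finset.sum_mul, ← Finset.sum_mul, innerStep s hu j b, neg_mul]
  rw [Finset.sum_congr rfl step1, Finset.sum_neg_distrib, neg_inj]
  rw [tri k (fun b m => reciprocal q s (j + b + 1 - m) * s m * reciprocal q s (k - b))]
  have step2 : ∀ m ∈ Finset.range (k + 1),
      ∑ c ∈ Finset.range (k + 1 - m),
          reciprocal q s (j + (m + c) + 1 - m) * s m * reciprocal q s (k - (m + c))
        = ∑ c ∈ Finset.range (k + 1 - m),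
            reciprocal q s (j + c + 1) * (s m * reciprocal q s (k - c - m)) := by
    intro m _
    exact Finset.sum_congr rfl fun c _ => by
      rw [show j + (m + c) + 1 - m = j + c + 1 by omega,
        show k - (m + c) = k - c - m by omega, Matrix.mul_assoc]
  rw [Finset.sum_congr rfl step2]
  rw [tri2 k (fun m c => reciprocal q s (j + c + 1) * (s m * reciprocal q s (k - c - m)))]
  have step3 : ∀ c ∈ Finset.range (k + 1),
      ∑ m ∈ Finset.range (k + 1 - c),
          reciprocal q s (j + c + 1) * (s m * reciprocal q s (k - c - m))
        = reciprocal q s (j + c + 1) *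
            (if k - c = 0 then (1 : Mq q) else 0) := by
    intro c hc
    rw [← Finset.mul_sum, show k + 1 - c = (k - c) + 1 by
      have := Finset.mem_range.mp hc; omega]
    rw [conv1' s hu (k - c)]
  rw [Finset.sum_congr rfl step3]
  have step4 : ∀ c ∈ Finset.range (k + 1),
      reciprocal q s (j + c + 1) * (if k - c = 0 then (1 : Mq q) else 0)
        = if c = k then reciprocal q s (j + c + 1) else 0 := by
    intro c hc
    have hck := Finset.mem_range.mp hc
    by_cases h : c = k
    · rw [if_pos (by omega), if_pos h, Matrix.mul_one]
    · rw [if_neg (by omega), if_neg h, Matrix.mul_zero]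
  rw [Finset.sum_congr rfl step4, Finset.sum_ite_eq' (Finset.range (k + 1)) k,
    if_pos (Finset.self_mem_range_succ k)]

lemma deltaSum (s : ℕ → Mq q) (hu : IsUnit (s 0).det) (j k : ℕ) :
    ∑ a ∈ Finset.range (j + 1), ∑ b ∈ Finset.range (k + 1),
        reciprocal q s (j - a) *
          (s (a + b + 2) - s (a + 1) * (s 0)⁻¹ * s (b + 1)) * reciprocal q s (k - b)
      = -reciprocal q s (j + k + 2) := by
  have hshift : ∑ a ∈ Finset.range (j + 1), ∑ b ∈ Finset.range (k + 1),
        reciprocal q s (j - a) * s (a + b + 2) * reciprocal q s (k - b)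
      = -reciprocal q s (j + k + 2) +
          reciprocal q s (j + 1) * s 0 * reciprocal q s (k + 1) := by
    have h := bigSum s hu j (k + 1)
    have e1 : ∀ a ∈ Finset.range (j + 1),
        ∑ b ∈ Finset.range (k + 2),
            reciprocal q s (j - a) * s (a + b + 1) * reciprocal q s (k + 1 - b)
          = (∑ b ∈ Finset.range (k + 1),
              reciprocal q s (j - a) * s (a + b + 2) * reciprocal q s (k - b)) +
            reciprocal q s (j - a) * s (a + 1) * reciprocal q s (k + 1) := by
      intro a _
      rw [Finset.sum_range_succ']
      congr 1
      exact Finset.sum_congr rfl fun b _ => by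
        rw [show a + (b + 1) + 1 = a + b + 2 by omega,
          show k + 1 - (b + 1) = k - b by omega]
    rw [Finset.sum_congr rfl e1, Finset.sum_add_distrib] at h
    have e2 : ∑ a ∈ Finset.range (j + 1),
        reciprocal q s (j - a) * s (a + 1) * reciprocal q s (k + 1)
        = -(reciprocal q s (j + 1) * s 0 * reciprocal q s (k + 1)) := by
      rw [← Finset.sum_mul, rowConv s hu j, neg_mul]
    rw [e2] at h
    rw [show j + (k + 1) + 1 = j + k + 2 by omega] at h
    linear_combination (norm := module) h
  have hcorr : ∑ a ∈ Finset.range (j + 1), ∑ b ∈ Finset.range (k + 1),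
        reciprocal q s (j - a) * (s (a + 1) * (s 0)⁻¹ * s (b + 1)) *
          reciprocal q s (k - b)
      = reciprocal q s (j + 1) * s 0 * reciprocal q s (k + 1) := by
    have e3 : ∀ a b, reciprocal q s (j - a) * (s (a + 1) * (s 0)⁻¹ * s (b + 1)) *
          reciprocal q s (k - b)
        = (reciprocal q s (j - a) * s (a + 1)) *
            ((s 0)⁻¹ * (s (b + 1) * reciprocal q s (k - b))) := fun a b => by
      simp only [Matrix.mul_assoc]
    rw [Finset.sum_congr rfl fun a _ => Finset.sum_congr rfl fun b _ => e3 a b]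
    rw [← Finset.sum_mul_sum, rowConv s hu j, ← Finset.mul_sum, colConv s hu k,
      mul_neg, Matrix.nonsing_inv_mul_cancel_left _ _ hu, neg_mul, mul_neg, neg_neg]
  have expand : ∀ a b, reciprocal q s (j - a) *
        (s (a + b + 2) - s (a + 1) * (s 0)⁻¹ * s (b + 1)) * reciprocal q s (k - b)
      = reciprocal q s (j - a) * s (a + b + 2) * reciprocal q s (k - b) -
        reciprocal q s (j - a) * (s (a + 1) * (s 0)⁻¹ * s (b + 1)) *
          reciprocal q s (k - b) := fun a b => by
    rw [Matrix.mul_sub, Matrix.sub_mul]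
  rw [Finset.sum_congr rfl fun a _ => Finset.sum_congr rfl fun b _ => expand a b]
  simp only [Finset.sum_sub_distrib]
  rw [hshift, hcorr]
  abel

/-! ### Katetov transform values -/

lemma kat_one (s : ℕ → Mq q) : katetov q 1 s = katetov1 q s := by
  simp [katetov]

lemma kat1_def (s : ℕ → Mq q) (j : ℕ) :
    katetov1 q s j = -(s 0) * reciprocal q s (j + 1) * s 0 := rfl

lemma tcol (s : ℕ → Mq q) (hu : IsUnit (s 0).det) (j : ℕ) :
    katetov1 q s j
      = s 0 * ∑ l ∈ Finset.range (j + 1), reciprocal q s (j - l) * s (l + 1) := by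
  rw [kat1_def, rowConv s hu j]
  simp only [neg_mul, mul_neg, Matrix.mul_assoc]

lemma tHank (s : ℕ → Mq q) (hu : IsUnit (s 0).det) (i k : ℕ) :
    katetov1 q s (i + k)
      = s 0 * (∑ a ∈ Finset.range (i + 1), ∑ b ∈ Finset.range (k + 1),
          reciprocal q s (i - a) * s (a + b + 1) * reciprocal q s (k - b)) * s 0 := by
  rw [kat1_def, bigSum s hu i k]
  simp only [neg_mul, mul_neg, Matrix.mul_assoc]

lemma tHank2 (s : ℕ → Mq q) (hu : IsUnit (s 0).det) (i k : ℕ) :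
    katetov1 q s (i + k + 1)
      = s 0 * (∑ a ∈ Finset.range (i + 1), ∑ b ∈ Finset.range (k + 1),
          reciprocal q s (i - a) *
            (s (a + b + 2) - s (a + 1) * (s 0)⁻¹ * s (b + 1)) *
              reciprocal q s (k - b)) * s 0 := by
  rw [kat1_def, deltaSum s hu i k, show i + k + 1 + 1 = i + k + 2 by omega]
  simp only [neg_mul, mul_neg, Matrix.mul_assoc]

/-! ### sandwich factorizations -/

lemma toepSandwich (n : ℕ) (f h : ℕ → Mq q) (g : ℕ → ℕ → Mq q) :
    blk q n (fun i j => if j ≤ i then f (i - j) else 0) * blk q n g *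
        blk q n (fun i j => if i ≤ j then h (j - i) else 0)
      = blk q n fun i k => ∑ a ∈ Finset.range (i + 1), ∑ b ∈ Finset.range (k + 1),
          f (i - a) * g a b * h (k - b) := by
  rw [blk_mul, blk_mul]
  refine blk_congr fun i k hi hk => ?_
  have e1 : ∀ b, ∑ a ∈ Finset.range (n + 1),
        (if a ≤ i then f (i - a) else 0) * g a b
      = ∑ a ∈ Finset.range (i + 1), f (i - a) * g a b := by
    intro b
    rw [← sum_if_le (n + 1) i hi (fun a => f (i - a) * g a b)]
    exact Finset.sum_congr rfl fun a _ => by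
      by_cases hh : a ≤ i
      · rw [if_pos hh, if_pos hh]
      · rw [if_neg hh, if_neg hh, Matrix.zero_mul]
  have e2 : ∀ b, (∑ a ∈ Finset.range (i + 1), f (i - a) * g a b) *
        (if b ≤ k then h (k - b) else 0)
      = if b ≤ k then ∑ a ∈ Finset.range (i + 1), f (i - a) * g a b * h (k - b)
        else 0 := by
    intro b
    by_cases hh : b ≤ k
    · rw [if_pos hh, if_pos hh, Finset.sum_mul]
    · rw [if_neg hh, if_neg hh, Matrix.mul_zero]
  calc ∑ b ∈ Finset.range (n + 1),
        (∑ a ∈ Finset.range (n + 1), (if a ≤ i then f (i - a) else 0) * g a b) *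
          (if b ≤ k then h (k - b) else 0)
      = ∑ b ∈ Finset.range (n + 1),
          if b ≤ k then ∑ a ∈ Finset.range (i + 1), f (i - a) * g a b * h (k - b)
          else 0 := Finset.sum_congr rfl fun b _ => by rw [e1 b, e2 b]
    _ = ∑ b ∈ Finset.range (k + 1), ∑ a ∈ Finset.range (i + 1),
          f (i - a) * g a b * h (k - b) := sum_if_le (n + 1) k hk _
    _ = ∑ a ∈ Finset.range (i + 1), ∑ b ∈ Finset.range (k + 1),
          f (i - a) * g a b * h (k - b) := Finset.sum_comm

lemma Wt_conjT (s : ℕ → Mq q) (hs : IsStieltjesPD q s) (n : ℕ) :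
    (Wt q s n)ᴴ
      = blk q n fun i j => if i ≤ j then reciprocal q s (j - i) * s 0 else 0 := by
  rw [Wt, blk_conjT]
  refine blk_congr fun i k hi hk => ?_
  by_cases h : i ≤ k
  · rw [if_pos h, if_pos h, Matrix.conjTranspose_mul, herm_r s hs, herm_s s hs]
  · rw [if_neg h, if_neg h, Matrix.conjTranspose_zero]

lemma M1fact (s : ℕ → Mq q) (hs : IsStieltjesPD q s) (n : ℕ) :
    Hmat q (katetov1 q s) n = Wt q s n * Kmat q s n * (Wt q s n)ᴴ := by
  have hu := s0_det s hs
  rw [Wt_conjT s hs n, Wt,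
    show Kmat q s n = blk q n fun i j => s (i + j + 1) from rfl,
    toepSandwich n (fun m => s 0 * reciprocal q s m)
      (fun m => reciprocal q s m * s 0) (fun a b => s (a + b + 1))]
  show blk q n (fun i k => katetov1 q s (i + k)) = _
  refine blk_congr fun i k hi hk => ?_
  rw [tHank s hu i k]
  simp only [Finset.mul_sum, Finset.sum_mul, Matrix.mul_assoc]

def Dl (q : ℕ) (s : ℕ → Mq q) (n : ℕ) :
    Matrix (Fin (n + 1) × Fin q) (Fin (n + 1) × Fin q) ℂ :=
  blk q n fun i j => s (i + j + 2) - s (i + 1) * (s 0)⁻¹ * s (j + 1)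

lemma M2fact (s : ℕ → Mq q) (hs : IsStieltjesPD q s) (n : ℕ) :
    Kmat q (katetov1 q s) n = Wt q s n * Dl q s n * (Wt q s n)ᴴ := by
  have hu := s0_det s hs
  rw [Wt_conjT s hs n, Wt, Dl,
    toepSandwich n (fun m => s 0 * reciprocal q s m)
      (fun m => reciprocal q s m * s 0)
      (fun a b => s (a + b + 2) - s (a + 1) * (s 0)⁻¹ * s (b + 1))]
  show blk q n (fun i k => katetov1 q s (i + k + 1)) = _
  refine blk_congr fun i k hi hk => ?_
  rw [tHank2 s hu i k]
  simp only [Finset.mul_sum, Finset.sum_mul, Matrix.mul_assoc]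

lemma M3fact (s : ℕ → Mq q) (hs : IsStieltjesPD q s) (n : ℕ) :
    ycol q (katetov1 q s) n = Wt q s n * bcol q n (fun i => s (i + 1)) := by
  have hu := s0_det s hs
  rw [Wt, blk_mul_bcol]
  show bcol q n (katetov1 q s) = _
  refine bcol_congr fun i hi => ?_
  have e1 : ∑ a ∈ Finset.range (n + 1),
        (if a ≤ i then s 0 * reciprocal q s (i - a) else 0) * s (a + 1)
      = ∑ a ∈ Finset.range (i + 1), s 0 * reciprocal q s (i - a) * s (a + 1) := by
    rw [← sum_if_le (n + 1) i hi (fun a => s 0 * reciprocal q s (i - a) * s (a + 1))]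
    exact Finset.sum_congr rfl fun a _ => by
      by_cases hh : a ≤ i
      · rw [if_pos hh, if_pos hh]
      · rw [if_neg hh, if_neg hh, Matrix.zero_mul]
  rw [e1, tcol s hu i, Finset.mul_sum]
  simp only [Matrix.mul_assoc]

lemma vcol_bcol (n : ℕ) :
    vcol q n = bcol q n (fun i => if i = 0 then (1 : Mq q) else 0) := by
  ext p b
  show (if (p.1 : ℕ) = 0 ∧ p.2 = b then 1 else 0)
      = (if (p.1 : ℕ) = 0 then (1 : Mq q) else 0) p.2 b
  by_cases h : (p.1 : ℕ) = 0
  · simp [h, Matrix.one_apply]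
  · simp [h]

lemma M4fact (s : ℕ → Mq q) (n : ℕ) :
    Vt q s n * vcol q n = ycol q s n * (s 0)⁻¹ := by
  rw [Vt, vcol_bcol, blk_mul_bcol,
    show ycol q s n = bcol q n s from rfl, bcol_mul_right]
  refine bcol_congr fun i hi => ?_
  have e1 : ∀ a, (if a ≤ i then s (i - a) * (s 0)⁻¹ else 0) *
        (if a = 0 then (1 : Mq q) else 0)
      = if a = 0 then s i * (s 0)⁻¹ else 0 := by
    intro a
    by_cases h : a = 0
    · rw [if_pos h, if_pos h, Matrix.mul_one, h, if_pos (Nat.zero_le i)]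
      rw [Nat.sub_zero]
    · rw [if_neg h, if_neg h, Matrix.mul_zero]
  rw [Finset.sum_congr rfl fun a _ => e1 a,
    Finset.sum_ite_eq' (Finset.range (n + 1)) 0 (fun _ => s i * (s 0)⁻¹),
    if_pos (Finset.mem_range.mpr (by omega))]

lemma invSandwich (s : ℕ → Mq q) (hu : IsUnit (s 0).det) (n : ℕ)
    (A : Matrix (Fin (n + 1) × Fin q) (Fin (n + 1) × Fin q) ℂ)
    (hA : IsUnit A.det) :
    (Wt q s n * A * (Wt q s n)ᴴ)⁻¹ = (Vt q s n)ᴴ * A⁻¹ * Vt q s n := by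
  apply Matrix.inv_eq_right_inv
  have h1 : (Wt q s n)ᴴ * (Vt q s n)ᴴ = 1 := by
    rw [← Matrix.conjTranspose_mul, VW_one s hu n, Matrix.conjTranspose_one]
  have h2 : Wt q s n * A * (Wt q s n)ᴴ * ((Vt q s n)ᴴ * A⁻¹ * Vt q s n)
      = Wt q s n * (A * (((Wt q s n)ᴴ * (Vt q s n)ᴴ) * (A⁻¹ * Vt q s n))) := by
    simp only [Matrix.mul_assoc]
  rw [h2, h1, Matrix.one_mul, Matrix.mul_nonsing_inv_cancel_left _ _ hA,
    WV_one s hu n]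

/-! ### 2x2 block inverse -/

lemma fromBlocks_inv_eq {m p : Type*} [Fintype m] [Fintype p] [DecidableEq m]
    [DecidableEq p] (A : Matrix m m ℂ) (B : Matrix m p ℂ) (C : Matrix p m ℂ)
    (D : Matrix p p ℂ) (hA : IsUnit A.det) (hD : IsUnit (D - C * A⁻¹ * B).det) :
    (Matrix.fromBlocks A B C D)⁻¹
      = Matrix.fromBlocks
          (A⁻¹ + A⁻¹ * B * (D - C * A⁻¹ * B)⁻¹ * C * A⁻¹)
          (-(A⁻¹ * B * (D - C * A⁻¹ * B)⁻¹))
          (-((D - C * A⁻¹ * B)⁻¹ * C * A⁻¹))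
          ((D - C * A⁻¹ * B)⁻¹) := by
  set Δ := D - C * A⁻¹ * B with hΔ
  apply Matrix.inv_eq_right_inv
  rw [Matrix.fromBlocks_multiply]
  have g1 : A * (A⁻¹ + A⁻¹ * B * Δ⁻¹ * C * A⁻¹) + B * (-(Δ⁻¹ * C * A⁻¹)) = 1 := by
    rw [Matrix.mul_add, Matrix.mul_nonsing_inv _ hA, Matrix.mul_neg]
    have c1 : A * (A⁻¹ * B * Δ⁻¹ * C * A⁻¹) = B * (Δ⁻¹ * C * A⁻¹) := by
      simp only [Matrix.mul_assoc]
      rw [Matrix.mul_nonsing_inv_cancel_left _ _ hA]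
    rw [c1]
    abel
  have g2 : A * (-(A⁻¹ * B * Δ⁻¹)) + B * Δ⁻¹ = 0 := by
    rw [Matrix.mul_neg]
    have c2 : A * (A⁻¹ * B * Δ⁻¹) = B * Δ⁻¹ := by
      simp only [Matrix.mul_assoc]
      rw [Matrix.mul_nonsing_inv_cancel_left _ _ hA]
    rw [c2]
    abel
  have hD2 : D = Δ + C * A⁻¹ * B := by rw [hΔ]; abel
  have g3 : C * (A⁻¹ + A⁻¹ * B * Δ⁻¹ * C * A⁻¹) + D * (-(Δ⁻¹ * C * A⁻¹)) = 0 := by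
    rw [Matrix.mul_add, Matrix.mul_neg]
    have c3 : C * (A⁻¹ * B * Δ⁻¹ * C * A⁻¹)
        = (C * A⁻¹ * B) * (Δ⁻¹ * (C * A⁻¹)) := by simp only [Matrix.mul_assoc]
    have c4 : D * (Δ⁻¹ * C * A⁻¹)
        = C * A⁻¹ + (C * A⁻¹ * B) * (Δ⁻¹ * (C * A⁻¹)) := by
      have c4' : D * (Δ⁻¹ * C * A⁻¹) = D * (Δ⁻¹ * (C * A⁻¹)) := by
        simp only [Matrix.mul_assoc]
      rw [c4', hD2, Matrix.add_mul, Matrix.mul_nonsing_inv_cancel_left _ _ hD]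
    rw [c3, c4]
    abel
  have g4 : C * (-(A⁻¹ * B * Δ⁻¹)) + D * Δ⁻¹ = 1 := by
    rw [Matrix.mul_neg]
    have c7 : C * (A⁻¹ * B * Δ⁻¹) = (C * A⁻¹ * B) * Δ⁻¹ := by
      simp only [Matrix.mul_assoc]
    have c8 : D * Δ⁻¹ = 1 + (C * A⁻¹ * B) * Δ⁻¹ := by
      rw [hD2, Matrix.add_mul, Matrix.mul_nonsing_inv _ hD]
    rw [c7, c8]
    abel
  rw [g1, g2, g3, g4, Matrix.fromBlocks_one]

/-! ### decomposition of `H_{n+1}` -/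

def esucc (q n : ℕ) : (Fin (n + 2) × Fin q) ≃ (Fin q ⊕ (Fin (n + 1) × Fin q)) where
  toFun p :=
    if h : (p.1 : ℕ) = 0 then Sum.inl p.2
    else Sum.inr (⟨(p.1 : ℕ) - 1, by have := p.1.isLt; omega⟩, p.2)
  invFun x :=
    Sum.elim (fun a => (⟨0, by omega⟩, a))
      (fun r => (⟨(r.1 : ℕ) + 1, by have := r.1.isLt; omega⟩, r.2)) x
  left_inv p := by
    rcases p with ⟨i, a⟩
    by_cases h : (i : ℕ) = 0
    · simp only [dif_pos h, Sum.elim_inl]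
      exact Prod.ext_iff.mpr ⟨Fin.ext h.symm, rfl⟩
    · simp only [dif_neg h, Sum.elim_inr]
      exact Prod.ext_iff.mpr ⟨Fin.ext (by have := i.isLt; simp; omega), rfl⟩
  right_inv x := by
    rcases x with a | r
    · simp
    · simp only [Sum.elim_inr, dif_neg (Nat.succ_ne_zero (r.1 : ℕ))]
      exact congrArg Sum.inr (Prod.ext (Fin.ext (Nat.add_sub_cancel _ _)) rfl)

lemma Hsucc (s : ℕ → Mq q) (n : ℕ) :
    Hmat q s (n + 1)
      = (Matrix.fromBlocks (s 0) (brow q n fun i => s (i + 1))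
          (bcol q n fun i => s (i + 1))
          (blk q n fun i j => s (i + j + 2))).submatrix (esucc q n) (esucc q n) := by
  ext p r
  rcases p with ⟨⟨i, hi⟩, a⟩
  rcases r with ⟨⟨k, hk⟩, b⟩
  show s (i + k) a b = _
  rw [Matrix.submatrix_apply]
  by_cases h1 : i = 0 <;> by_cases h2 : k = 0 <;>
    simp only [esucc, Equiv.coe_fn_mk, h1, h2, dif_pos, dif_neg, not_false_iff,
      Nat.zero_ne_one]
  · rw [Matrix.fromBlocks_apply₁₁]
  · rw [Matrix.fromBlocks_apply₁₂]
    show s (0 + k) a b = s (k - 1 + 1) a b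
    rw [show (0 : ℕ) + k = k by omega, show k - 1 + 1 = k by omega]
  · rw [Matrix.fromBlocks_apply₂₁]
    show s (i + 0) a b = s (i - 1 + 1) a b
    rw [show i + 0 = i by omega, show i - 1 + 1 = i by omega]
  · rw [Matrix.fromBlocks_apply₂₂]
    show s (i + k) a b = s (i - 1 + (k - 1) + 2) a b
    rw [show i - 1 + (k - 1) + 2 = i + k by omega]

lemma DlEq (s : ℕ → Mq q) (n : ℕ) :
    (blk q n fun i j => s (i + j + 2)) -
        (bcol q n fun i => s (i + 1)) * (s 0)⁻¹ * (brow q n fun i => s (i + 1))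
      = Dl q s n := by
  rw [bcol_mul_brow, blk_sub, Dl]

lemma detDl (s : ℕ → Mq q) (hs : IsStieltjesPD q s) (n : ℕ) :
    IsUnit (Dl q s n).det := by
  have hu := s0_det s hs
  have hinv : Invertible (s 0) := (s 0).invertibleOfIsUnitDet hu
  have hdet := hdetH s hs (n + 1)
  rw [Hsucc s n, Matrix.det_submatrix_equiv_self, Matrix.det_fromBlocks₁₁,
    Matrix.invOf_eq_nonsing_inv, DlEq s n] at hdet
  exact isUnit_of_mul_isUnit_right hdet

/-! ### collapsing `vcol` products -/

lemma vH_left {n : ℕ} {γ : Type*} (Y : Matrix (Fin (n + 2) × Fin q) γ ℂ)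
    (a : Fin q) (b : γ) :
    ((vcol q (n + 1))ᴴ * Y) a b = Y (⟨0, by omega⟩, a) b := by
  rw [Matrix.mul_apply]
  rw [Finset.sum_eq_single ((⟨0, by omega⟩ : Fin (n + 2)), a)]
  · rw [Matrix.conjTranspose_apply]
    show star (if ((0 : ℕ) = 0 ∧ a = a : Prop) then (1 : ℂ) else 0) * Y _ b = _
    rw [if_pos ⟨rfl, rfl⟩, star_one, one_mul]
  · intro p _ hp
    rw [Matrix.conjTranspose_apply]
    show star (if ((p.1 : ℕ) = 0 ∧ p.2 = a : Prop) then (1 : ℂ) else 0) * Y p b = 0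
    rw [if_neg, star_zero, zero_mul]
    rintro ⟨h1, h2⟩
    exact hp (Prod.ext_iff.mpr ⟨Fin.ext h1, h2⟩)
  · intro h; exact absurd (Finset.mem_univ _) h

lemma vH_right {n : ℕ} {γ : Type*} (Z : Matrix γ (Fin (n + 2) × Fin q) ℂ)
    (a : γ) (b : Fin q) :
    (Z * vcol q (n + 1)) a b = Z a (⟨0, by omega⟩, b) := by
  rw [Matrix.mul_apply]
  rw [Finset.sum_eq_single ((⟨0, by omega⟩ : Fin (n + 2)), b)]
  · show Z a _ * (if ((0 : ℕ) = 0 ∧ b = b : Prop) then (1 : ℂ) else 0) = _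
    rw [if_pos ⟨rfl, rfl⟩, mul_one]
  · intro p _ hp
    show Z a p * (if ((p.1 : ℕ) = 0 ∧ p.2 = b : Prop) then (1 : ℂ) else 0) = 0
    rw [if_neg, mul_zero]
    rintro ⟨h1, h2⟩
    exact hp (Prod.ext_iff.mpr ⟨Fin.ext h1, h2⟩)
  · intro h; exact absurd (Finset.mem_univ _) h

lemma vblock {n : ℕ} (X : Matrix (Fin q ⊕ (Fin (n + 1) × Fin q))
      (Fin q ⊕ (Fin (n + 1) × Fin q)) ℂ) :
    (vcol q (n + 1))ᴴ * X.submatrix (esucc q n) (esucc q n) * vcol q (n + 1)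
      = Matrix.of fun a b => X (Sum.inl a) (Sum.inl b) := by
  ext a b
  rw [vH_right, vH_left]
  rw [Matrix.submatrix_apply]
  show X (esucc q n (⟨0, _⟩, a)) (esucc q n (⟨0, _⟩, b)) = X (Sum.inl a) (Sum.inl b)
  rw [show esucc q n (⟨0, by omega⟩, a) = Sum.inl a by simp [esucc],
    show esucc q n (⟨0, by omega⟩, b) = Sum.inl b by simp [esucc]]

lemma Hinv_block (s : ℕ → Mq q) (hs : IsStieltjesPD q s) (n : ℕ) :
    (vcol q (n + 1))ᴴ * (Hmat q s (n + 1))⁻¹ * vcol q (n + 1)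
      = (s 0)⁻¹ + (s 0)⁻¹ * (brow q n fun i => s (i + 1)) * (Dl q s n)⁻¹ *
          (bcol q n fun i => s (i + 1)) * (s 0)⁻¹ := by
  have hu := s0_det s hs
  have hΔ : IsUnit ((blk q n fun i j => s (i + j + 2)) -
      (bcol q n fun i => s (i + 1)) * (s 0)⁻¹ *
        (brow q n fun i => s (i + 1))).det := by
    rw [DlEq s n]; exact detDl s hs n
  rw [Hsucc s n, Matrix.inv_submatrix_equiv,
    fromBlocks_inv_eq _ _ _ _ hu hΔ, vblock]
  ext a b
  rw [Matrix.of_apply, Matrix.fromBlocks_apply₁₁]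
  rw [DlEq s n]

/-! ### main keys -/

lemma Akey (s : ℕ → Mq q) (hs : IsStieltjesPD q s) (n : ℕ) :
    (ycol q (katetov1 q s) n)ᴴ * (Kmat q (katetov1 q s) n)⁻¹ *
        ycol q (katetov1 q s) n
      = s 0 * ((vcol q (n + 1))ᴴ * (Hmat q s (n + 1))⁻¹ * vcol q (n + 1)) * s 0 -
          s 0 := by
  have hu := s0_det s hs
  rw [M3fact s hs n, M2fact s hs n, invSandwich s hu n (Dl q s n) (detDl s hs n)]
  have hvw : Vt q s n * Wt q s n = 1 := VW_one s hu n
  have hwv : (Wt q s n)ᴴ * (Vt q s n)ᴴ = 1 := by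
    rw [← Matrix.conjTranspose_mul, hvw, Matrix.conjTranspose_one]
  have h1 : (Wt q s n * bcol q n fun i => s (i + 1))ᴴ *
        ((Vt q s n)ᴴ * (Dl q s n)⁻¹ * Vt q s n) *
        (Wt q s n * bcol q n fun i => s (i + 1))
      = (bcol q n fun i => s (i + 1))ᴴ * (Dl q s n)⁻¹ *
          (bcol q n fun i => s (i + 1)) := by
    rw [Matrix.conjTranspose_mul]
    simp only [Matrix.mul_assoc]
    rw [← Matrix.mul_assoc (Vt q s n) (Wt q s n), hvw, Matrix.one_mul,
      ← Matrix.mul_assoc ((Wt q s n)ᴴ) ((Vt q s n)ᴴ), hwv, Matrix.one_mul]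
  rw [h1, Hinv_block s hs n, bcol_conjT]
  have hz : (brow q n fun i => (s (i + 1))ᴴ) = brow q n fun i => s (i + 1) :=
    congrArg (brow q n) (funext fun i => herm_s s hs (i + 1))
  rw [hz]
  rw [Matrix.mul_add, Matrix.add_mul]
  rw [show s 0 * (s 0)⁻¹ * s 0 = s 0 from
    Matrix.nonsing_inv_mul_cancel_right _ _ hu]
  have h2 : s 0 * ((s 0)⁻¹ * (brow q n fun i => s (i + 1)) * (Dl q s n)⁻¹ *
        (bcol q n fun i => s (i + 1)) * (s 0)⁻¹) * s 0
      = (brow q n fun i => s (i + 1)) * (Dl q s n)⁻¹ *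
          (bcol q n fun i => s (i + 1)) := by
    simp only [Matrix.mul_assoc]
    rw [Matrix.mul_nonsing_inv_cancel_left _ _ hu]
    rw [show (s 0)⁻¹ * s 0 = 1 from Matrix.nonsing_inv_mul _ hu, Matrix.mul_one]
  rw [h2]
  abel

lemma Bkey (s : ℕ → Mq q) (hs : IsStieltjesPD q s) (n : ℕ) :
    (vcol q n)ᴴ * (Hmat q (katetov1 q s) n)⁻¹ * vcol q n
      = (s 0)⁻¹ * ((ycol q s n)ᴴ * (Kmat q s n)⁻¹ * ycol q s n) * (s 0)⁻¹ := by
  have hu := s0_det s hs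
  rw [M1fact s hs n, invSandwich s hu n (Kmat q s n) (hdetK s hs n)]
  have h1 : (vcol q n)ᴴ * ((Vt q s n)ᴴ * (Kmat q s n)⁻¹ * Vt q s n) * vcol q n
      = (Vt q s n * vcol q n)ᴴ * (Kmat q s n)⁻¹ * (Vt q s n * vcol q n) := by
    rw [Matrix.conjTranspose_mul]
    simp only [Matrix.mul_assoc]
  rw [h1, M4fact s n, Matrix.conjTranspose_mul, Matrix.conjTranspose_nonsing_inv,
    herm_s s hs 0]
  simp only [Matrix.mul_assoc]

/-! ### small cases -/

lemma t0_eq (s : ℕ → Mq q) (hu : IsUnit (s 0).det) : katetov1 q s 0 = s 1 := by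
  rw [kat1_def, recip_succ, Finset.sum_range_one, recip_zero]
  simp only [neg_mul, mul_neg, neg_neg, Nat.sub_zero]
  rw [Matrix.mul_nonsing_inv_cancel_left _ _ hu,
    Matrix.nonsing_inv_mul_cancel_right _ _ hu]

lemma Hmat0 (s : ℕ → Mq q) :
    Hmat q s 0 = (s 0).submatrix ⇑(eOne q) ⇑(eOne q) := by
  ext p r
  have h1 : (p.1 : ℕ) = 0 := Nat.lt_one_iff.mp p.1.isLt
  have h2 : (r.1 : ℕ) = 0 := Nat.lt_one_iff.mp r.1.isLt
  simp [Hmat, Matrix.submatrix_apply, eOne, h1, h2]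

lemma Kmat0 (t : ℕ → Mq q) :
    Kmat q t 0 = (t 1).submatrix ⇑(eOne q) ⇑(eOne q) := by
  ext p r
  have h1 : (p.1 : ℕ) = 0 := Nat.lt_one_iff.mp p.1.isLt
  have h2 : (r.1 : ℕ) = 0 := Nat.lt_one_iff.mp r.1.isLt
  simp [Kmat, Matrix.submatrix_apply, eOne, h1, h2]

lemma ycol0 (t : ℕ → Mq q) : ycol q t 0 = (t 0).submatrix ⇑(eOne q) id := by
  ext p b
  have h1 : (p.1 : ℕ) = 0 := Nat.lt_one_iff.mp p.1.isLt
  simp [ycol, Matrix.submatrix_apply, eOne, h1]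

lemma vcol0 : vcol q 0 = (1 : Mq q).submatrix ⇑(eOne q) id := by
  ext p b
  have h1 : (p.1 : ℕ) = 0 := Nat.lt_one_iff.mp p.1.isLt
  show (if (p.1 : ℕ) = 0 ∧ p.2 = b then (1 : ℂ) else 0) = (1 : Mq q) p.2 b
  rw [Matrix.one_apply]
  by_cases h : p.2 = b
  · rw [if_pos ⟨h1, h⟩, if_pos h]
  · rw [if_neg (fun hh => h hh.2), if_neg h]

lemma DSL0 (t : ℕ → Mq q) (ht0 : (t 0)ᴴ = t 0) :
    (ycol q t 0)ᴴ * (Kmat q t 0)⁻¹ * ycol q t 0 = t 0 * (t 1)⁻¹ * t 0 := by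
  rw [ycol0, Kmat0, Matrix.conjTranspose_submatrix, Matrix.inv_submatrix_equiv,
    Matrix.submatrix_mul_equiv, Matrix.submatrix_mul_equiv, Matrix.submatrix_id_id,
    ht0]

lemma vHv0 (s : ℕ → Mq q) :
    (vcol q 0)ᴴ * (Hmat q s 0)⁻¹ * vcol q 0 = (s 0)⁻¹ := by
  rw [vcol0, Hmat0 s, Matrix.conjTranspose_submatrix, Matrix.inv_submatrix_equiv,
    Matrix.submatrix_mul_equiv, Matrix.submatrix_mul_equiv, Matrix.submatrix_id_id,
    Matrix.conjTranspose_one, Matrix.one_mul, Matrix.mul_one]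

end DSAux
/-- `𝔏_k^{(1)} = s_0 𝔐_{k+1} s_0` and `𝔐_k^{(1)} = s_0⁻¹ 𝔏_k s_0⁻¹`. -/
theorem stmt5 (q : ℕ) (hq : 1 ≤ q) (s : ℕ → Mq q) (hs : IsStieltjesPD q s) (k : ℕ) :
    DSL q (katetov q 1 s) k = s 0 * DSM q s (k + 1) * s 0 ∧
      DSM q (katetov q 1 s) k = (s 0)⁻¹ * DSL q s k * (s 0)⁻¹ := by
  have hu := DSAux.s0_det s hs
  rw [DSAux.kat_one]
  constructor
  · cases k with
    | zero =>
        have hDSL : DSL q (katetov1 q s) 0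
            = katetov1 q s 0 * (katetov1 q s 1)⁻¹ * katetov1 q s 0 := rfl
        have ht0 : (katetov1 q s 0)ᴴ = katetov1 q s 0 := by
          rw [DSAux.t0_eq s hu, DSAux.herm_s s hs 1]
        have h1 := DSAux.DSL0 (katetov1 q s) ht0
        have h2 := DSAux.Akey s hs 0
        rw [hDSL, ← h1, h2]
        have hD : DSM q s 1
            = (vcol q 1)ᴴ * (Hmat q s 1)⁻¹ * vcol q 1 -
                (vcol q 0)ᴴ * (Hmat q s 0)⁻¹ * vcol q 0 := rfl
        rw [hD, DSAux.vHv0 s, Matrix.mul_sub, Matrix.sub_mul,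
          Matrix.nonsing_inv_mul_cancel_right _ _ hu]
    | succ n =>
        have hDSL : DSL q (katetov1 q s) (n + 1)
            = (ycol q (katetov1 q s) (n + 1))ᴴ * (Kmat q (katetov1 q s) (n + 1))⁻¹ *
                ycol q (katetov1 q s) (n + 1) -
              (ycol q (katetov1 q s) n)ᴴ * (Kmat q (katetov1 q s) n)⁻¹ *
                ycol q (katetov1 q s) n := rfl
        rw [hDSL, DSAux.Akey s hs (n + 1), DSAux.Akey s hs n]
        have hD : DSM q s (n + 2)
            = (vcol q (n + 2))ᴴ * (Hmat q s (n + 2))⁻¹ * vcol q (n + 2) -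
                (vcol q (n + 1))ᴴ * (Hmat q s (n + 1))⁻¹ * vcol q (n + 1) := rfl
        rw [hD, Matrix.mul_sub, Matrix.sub_mul]
        abel
  · cases k with
    | zero =>
        have hDSM : DSM q (katetov1 q s) 0 = (katetov1 q s 0)⁻¹ := rfl
        have hDSL : DSL q s 0 = s 0 * (s 1)⁻¹ * s 0 := rfl
        rw [hDSM, DSAux.t0_eq s hu, hDSL,
          Matrix.mul_assoc (s 0) ((s 1)⁻¹) (s 0)]
        rw [Matrix.nonsing_inv_mul_cancel_left _ _ hu,
          Matrix.mul_nonsing_inv_cancel_right _ _ hu]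
    | succ n =>
        have hDSM : DSM q (katetov1 q s) (n + 1)
            = (vcol q (n + 1))ᴴ * (Hmat q (katetov1 q s) (n + 1))⁻¹ *
                vcol q (n + 1) -
              (vcol q n)ᴴ * (Hmat q (katetov1 q s) n)⁻¹ * vcol q n := rfl
        rw [hDSM, DSAux.Bkey s hs (n + 1), DSAux.Bkey s hs n]
        have hDSL : DSL q s (n + 1)
            = (ycol q s (n + 1))ᴴ * (Kmat q s (n + 1))⁻¹ * ycol q s (n + 1) -
              (ycol q s n)ᴴ * (Kmat q s n)⁻¹ * ycol q s n := rfl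
        rw [hDSL, Matrix.mul_sub, Matrix.sub_mul]

end
end
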